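/- arXiv:1811.08539 — 8 statements merged into one kernel-verified Lean document; each statement's English description precedes it below -/
import Mathlib

section
/- If S ⊆ [m] × 𝒞 is not a partial schedule, then y_S belongs to the scheduling ideal sched, i.e., y_S ≡ 0 (mod sched). -/
open MvPolynomial

noncomputable section

/-- The scheduling ideal: generated by `Σ_C y_{iC} − 1` (i ∈ [m]) and `y_{iC}² − y_{iC}`. -/
def schedIdeal (m : ℕ) (C : Type*) [Fintype C] : Ideal (MvPolynomial (Fin m × C) ℝ) :=
  Ideal.span
    ((Set.range fun i : Fin m => (∑ c : C, X (i, c)) - 1) ∪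
     (Set.range fun e : Fin m × C => (X e : MvPolynomial (Fin m × C) ℝ) ^ 2 - X e))

/-- `S` is a partial schedule: every machine occurs in at most one pair of `S`. -/
def IsPartialSchedule {m : ℕ} {C : Type*} (S : Finset (Fin m × C)) : Prop :=
  ∀ p ∈ S, ∀ q ∈ S, p.1 = q.1 → p = q

/-- The square-free monomial `y_S = ∏_{(i,C)∈S} y_{iC}`. -/
def ymon {m : ℕ} {C : Type*} (S : Finset (Fin m × C)) : MvPolynomial (Fin m × C) ℝ :=
  ∏ e ∈ S, X e

/-- Auxiliary: in an ℝ-algebra, if `f * (k + Σ idempotents) = 0` with `k > 0`, then `f = 0`. -/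
lemma aux_idem {R : Type*} [CommRing R] [Algebra ℝ R] {ι : Type*} [DecidableEq ι]
    (T : Finset ι) :
    ∀ (e : ι → R) (f : R) (k : ℕ), 0 < k → (∀ j ∈ T, e j * e j = e j) →
      f * ((k : R) + ∑ j ∈ T, e j) = 0 → f = 0 := by
  induction T using Finset.induction with
  | empty =>
    intro e f k hk _ h
    simp only [Finset.sum_empty, add_zero] at h
    have h' : ((k : ℝ)) • f = 0 := by
      rw [Algebra.smul_def, map_natCast, mul_comm]
      exact h
    rcases smul_eq_zero.mp h' with h'' | h''
    · exact absurd h'' (by exact_mod_cast hk.ne')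
    · exact h''
  | insert _ _ ha ih =>
    rename_i a T'
    intro e f k hk hidem h
    rw [Finset.sum_insert ha] at h
    have hea : e a * e a = e a := hidem a (Finset.mem_insert_self a T')
    have h1 : (f * e a) * (((k + 1 : ℕ) : R) + ∑ j ∈ T', e j) = 0 := by
      push_cast
      linear_combination e a * h - f * hea
    have h2 : f * e a = 0 :=
      ih e (f * e a) (k + 1) (Nat.succ_pos k)
        (fun j hj => hidem j (Finset.mem_insert_of_mem hj)) h1
    have h3 : f * ((k : R) + ∑ j ∈ T', e j) = 0 := by
      linear_combination h - h2
    exact ih e f k hk (fun j hj => hidem j (Finset.mem_insert_of_mem hj)) h3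

/-- If `S` is not a partial schedule, then `y_S ≡ 0 (mod sched)`. -/
theorem ymon_mem_schedIdeal_of_not_partialSchedule
    {m : ℕ} {C : Type*} [Fintype C] [Nonempty C]
    (S : Finset (Fin m × C)) (hS : ¬ IsPartialSchedule S) :
    ymon S ∈ schedIdeal m C := by
  classical
  unfold IsPartialSchedule at hS
  push_neg at hS
  obtain ⟨p, hp, q, hq, h1, h2⟩ := hS
  have hne2 : p.2 ≠ q.2 := fun h => h2 (Prod.ext h1 h)
  rw [← Ideal.Quotient.eq_zero_iff_mem]
  set I := schedIdeal m C with hI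
  let mk := Ideal.Quotient.mk I
  have hx : ∀ e : Fin m × C, mk (X e) * mk (X e) = mk (X e) := by
    intro e
    rw [← map_mul, ← sub_eq_zero, ← map_sub, Ideal.Quotient.eq_zero_iff_mem]
    have : (X e : MvPolynomial (Fin m × C) ℝ) * X e - X e = X e ^ 2 - X e := by ring
    rw [this]
    exact Ideal.subset_span (Or.inr ⟨e, rfl⟩)
  have hsum : ∑ c : C, mk (X (p.1, c)) = 1 := by
    have h0 : mk ((∑ c : C, X (p.1, c)) - 1) = 0 :=
      Ideal.Quotient.eq_zero_iff_mem.mpr (Ideal.subset_span (Or.inl ⟨p.1, rfl⟩))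
    rw [map_sub, map_sum, map_one, sub_eq_zero] at h0
    exact h0
  -- split the sum
  have hsub : ({p.2, q.2} : Finset C) ⊆ Finset.univ := Finset.subset_univ _
  have hsplit : mk (X p) + mk (X q) +
      ∑ c ∈ Finset.univ \ ({p.2, q.2} : Finset C), mk (X (p.1, c)) = 1 := by
    have := Finset.sum_sdiff (f := fun c => mk (X (p.1, c))) hsub
    rw [Finset.sum_pair hne2] at this
    rw [← hsum, ← this]
    have hpq : (p.1, q.2) = q := by rw [h1]
    have hpp : (p.1, p.2) = p := rfl
    rw [hpq, hpp]
    ring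
  have hxp : mk (X p) * mk (X p) = mk (X p) := hx p
  have hxq : mk (X q) * mk (X q) = mk (X q) := hx q
  have key : (mk (X p) * mk (X q)) *
      (((1 : ℕ) : MvPolynomial (Fin m × C) ℝ ⧸ I) +
        ∑ c ∈ Finset.univ \ ({p.2, q.2} : Finset C), mk (X (p.1, c))) = 0 := by
    push_cast
    linear_combination (mk (X p) * mk (X q)) * hsplit - mk (X q) * hxp - mk (X p) * hxq
  have hf0 : mk (X p) * mk (X q) = 0 :=
    aux_idem (Finset.univ \ ({p.2, q.2} : Finset C)) (fun c => mk (X (p.1, c)))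
      (mk (X p) * mk (X q)) 1 one_pos (fun j _ => hx (p.1, j)) key
  -- conclude
  have hpq_sub : ({p, q} : Finset (Fin m × C)) ⊆ S := by
    intro x hx'
    rcases Finset.mem_insert.mp hx' with h | h
    · exact h ▸ hp
    · exact (Finset.mem_singleton.mp h) ▸ hq
  have hprod := Finset.prod_sdiff (f := fun e => mk (X e)) hpq_sub
  rw [Finset.prod_pair h2] at hprod
  show mk (ymon S) = 0
  rw [ymon, map_prod, ← hprod, hf0, mul_zero]
end
end

section
/- Let ℓ ∈ ℕ with ℓ ≤ m, and let S ⊆ [m] × 𝒞 be a partial schedule with |S| ≤ ℓ. Then, in the quotient ring ℝ[y]/sched, the class of y_S lies in the linear span of the set {class of y_L : L ⊆ [m] × 𝒞 is a partial schedule with |L| = ℓ}. -/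
open MvPolynomial

noncomputable section

theorem ymon_mem_span_aux
    {m : ℕ} {C : Type*} [Fintype C] [Nonempty C] (ℓ : ℕ) (hℓ : ℓ ≤ m)
    (k : ℕ) :
    ∀ S : Finset (Fin m × C), IsPartialSchedule S → S.card + k = ℓ →
    Ideal.Quotient.mk (schedIdeal m C) (ymon S) ∈
      Submodule.span ℝ
        {a : MvPolynomial (Fin m × C) ℝ ⧸ schedIdeal m C |
          ∃ L : Finset (Fin m × C), IsPartialSchedule L ∧ L.card = ℓ ∧
            a = Ideal.Quotient.mk (schedIdeal m C) (ymon L)} := by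
  induction k with
  | zero =>
    intro S hS hc
    exact Submodule.subset_span ⟨S, hS, by omega, rfl⟩
  | succ k ih =>
    intro S hS hc
    classical
    -- find machine i not used by S
    have hinj : Set.InjOn Prod.fst (S : Set (Fin m × C)) := fun p hp q hq h => hS p hp q hq h
    have himg : (S.image Prod.fst).card = S.card := Finset.card_image_of_injOn hinj
    have hlt : (S.image Prod.fst).card < Fintype.card (Fin m) := by
      simp [himg]; omega
    have hne : ((S.image Prod.fst)ᶜ : Finset (Fin m)).Nonempty := by
      rw [← Finset.card_pos, Finset.card_compl]
      omega
    obtain ⟨i, hi⟩ := hne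
    rw [Finset.mem_compl] at hi
    have hiS : ∀ c : C, (i, c) ∉ S := by
      intro c hc
      exact hi (Finset.mem_image.2 ⟨(i, c), hc, rfl⟩)
    -- key identity in the quotient
    have hone : Ideal.Quotient.mk (schedIdeal m C) (∑ c : C, X (i, c)) = 1 := by
      have : (∑ c : C, X (i, c)) - 1 ∈ schedIdeal m C :=
        Ideal.subset_span (Or.inl ⟨i, rfl⟩)
      have := (Ideal.Quotient.eq (I := schedIdeal m C)).2 this
      simpa using this
    have hsum : Ideal.Quotient.mk (schedIdeal m C) (ymon S) =
        ∑ c : C, Ideal.Quotient.mk (schedIdeal m C) (ymon (insert (i, c) S)) := by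
      have : ∀ c : C, ymon (insert (i, c) S) = X (i, c) * ymon S := fun c =>
        Finset.prod_insert (hiS c)
      simp only [this, map_mul]
      rw [← Finset.sum_mul, ← map_sum, hone, one_mul]
    rw [hsum]
    refine Submodule.sum_mem _ fun c _ => ih _ ?_ ?_
    · intro p hp q hq hpq
      rcases Finset.mem_insert.1 hp with rfl | hp <;>
      rcases Finset.mem_insert.1 hq with rfl | hq
      · rfl
      · exact absurd (Finset.mem_image.2 ⟨q, hq, hpq.symm⟩) hi
      · exact absurd (Finset.mem_image.2 ⟨p, hp, hpq⟩) hi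
      · exact hS p hp q hq hpq
    · rw [Finset.card_insert_of_notMem (hiS c)]
      omega

/-- In `ℝ[y]/sched`, the class of `y_S` (for a partial schedule `S` with `|S| ≤ ℓ ≤ m`) lies
in the span of the classes of `y_L` over partial schedules `L` with `|L| = ℓ`. -/
theorem ymon_mem_span_of_partialSchedule
    {m : ℕ} {C : Type*} [Fintype C] [Nonempty C] (ℓ : ℕ) (hℓ : ℓ ≤ m)
    (S : Finset (Fin m × C)) (hS : IsPartialSchedule S) (hcard : S.card ≤ ℓ) :
    Ideal.Quotient.mk (schedIdeal m C) (ymon S) ∈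
      Submodule.span ℝ
        {a : MvPolynomial (Fin m × C) ℝ ⧸ schedIdeal m C |
          ∃ L : Finset (Fin m × C), IsPartialSchedule L ∧ L.card = ℓ ∧
            a = Ideal.Quotient.mk (schedIdeal m C) (ymon L)} := by
  exact ymon_mem_span_aux ℓ hℓ (ℓ - S.card) S hS (by omega)
end
end

section
/- Let E = [3k] × 𝒞 and let Ẽ be the linear functional on ℝ[y]/I_E (I_E the ideal generated by the polynomials y_{iC}² − y_{iC}) defined on square-free monomials by Ẽ(y_S) = (1/(3k)_{|S|}) · ∏_{j=1}^{6} (k/2)_{δ_S(C_j)} if S is a partial schedule with |S| ≤ ⌊k/2⌋, and Ẽ(y_S) = 0 otherwise. Then Ẽ is S_{3k}-symmetric: for every f ∈ ℝ[y]/I_E, Ẽ(f) = Ẽ((1/(3k)!) Σ_{σ∈S_{3k}} σ·f), where σ acts by y_{iC} ↦ y_{σ(i)C}. -/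
open MvPolynomial

set_option synthInstance.maxHeartbeats 400000
noncomputable section
open scoped Classical

/-- The ideal `I_E` generated by `y_e^2 - y_e` for `e ∈ E`. -/
def cubeIdeal (E : Type*) : Ideal (MvPolynomial E ℝ) :=
  Ideal.span (Set.range fun e : E => (X e : MvPolynomial E ℝ) ^ 2 - X e)

/-- The quotient ring `ℝ[y]/I_E`. -/
abbrev CubeQuot (E : Type*) := MvPolynomial E ℝ ⧸ cubeIdeal E

def mkC {E : Type*} : MvPolynomial E ℝ →+* CubeQuot E :=
  Ideal.Quotient.mk (cubeIdeal E)

/-- `δ_S(c)`: the number of machines that `S` connects to configuration `c`. -/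
def deltaS {m : ℕ} {C : Type*} [DecidableEq C] (S : Finset (Fin m × C)) (c : C) : ℕ :=
  (S.filter fun e => e.2 = c).card

/-- Falling factorial `(x)_b = x(x−1)⋯(x−b+1)`, with `(x)_0 = 1`. -/
def ffall : ℝ → ℕ → ℝ
  | _, 0 => 1
  | x, n + 1 => x * ffall (x - 1) n

/-- The action of a machine permutation `σ ∈ S_m` on `ℝ[y]`, `σ · y_{iC} = y_{σ(i)C}`. -/
def permAct {m : ℕ} {C : Type*} (σ : Equiv.Perm (Fin m))
    (f : MvPolynomial (Fin m × C) ℝ) : MvPolynomial (Fin m × C) ℝ :=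
  MvPolynomial.rename (fun e => (σ e.1, e.2)) f

/-- Symmetrization: `sym(f) = (1/m!) Σ_{σ∈S_m} σ·f`. -/
def symPoly {m : ℕ} {C : Type*} (f : MvPolynomial (Fin m × C) ℝ) :
    MvPolynomial (Fin m × C) ℝ :=
  (m.factorial : ℝ)⁻¹ • ∑ σ : Equiv.Perm (Fin m), permAct σ f

section Helpers
variable {m : ℕ}

lemma mkC_X_sq {E : Type*} (e : E) : mkC ((X e : MvPolynomial E ℝ) ^ 2) = mkC (X e) := by
  rw [← sub_eq_zero, ← map_sub]
  exact Ideal.Quotient.eq_zero_iff_mem.2 (Ideal.subset_span ⟨e, rfl⟩)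

lemma mkC_X_pow {E : Type*} (e : E) (n : ℕ) (hn : 1 ≤ n) :
    mkC ((X e : MvPolynomial E ℝ) ^ n) = mkC (X e) := by
  induction n with
  | zero => omega
  | succ n ih =>
    rcases Nat.eq_zero_or_pos n with h | h
    · subst h; simp
    · rw [pow_succ, map_mul, ih h, ← map_mul, ← sq, mkC_X_sq]

lemma mkC_smul {E : Type*} (c : ℝ) (p : MvPolynomial E ℝ) :
    mkC (c • p) = c • mkC p := by
  have h := map_smul (Ideal.Quotient.mkₐ ℝ (cubeIdeal E)) c p
  rw [Ideal.Quotient.mkₐ_eq_mk] at h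
  exact h

lemma mkC_monomial {C : Type*} (d : Fin m × C →₀ ℕ) :
    mkC (monomial d (1 : ℝ)) = mkC (ymon d.support) := by
  rw [monomial_eq, map_one, one_mul, ymon, Finsupp.prod, map_prod, map_prod]
  exact Finset.prod_congr rfl fun e he =>
    mkC_X_pow e (d e) (Nat.one_le_iff_ne_zero.2 (Finsupp.mem_support_iff.1 he))

/-- The embedding `(i,c) ↦ (σ i, c)`. -/
def permEmb {C : Type*} (σ : Equiv.Perm (Fin m)) : Fin m × C ↪ Fin m × C :=
  ⟨fun e => (σ e.1, e.2), fun p q h => by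
    simp only [Prod.mk.injEq] at h
    exact Prod.ext (σ.injective h.1) h.2⟩

lemma map_partial {C : Type*} (σ : Equiv.Perm (Fin m)) (S : Finset (Fin m × C)) :
    IsPartialSchedule (S.map (permEmb σ)) ↔ IsPartialSchedule S := by
  constructor
  · intro h p hp q hq hpq
    exact (permEmb σ).injective (h _ (Finset.mem_map_of_mem _ hp) _
      (Finset.mem_map_of_mem _ hq) (by exact congrArg σ hpq))
  · rintro h p hp q hq hpq
    obtain ⟨p', hp', rfl⟩ := Finset.mem_map.1 hp
    obtain ⟨q', hq', rfl⟩ := Finset.mem_map.1 hq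
    have : p'.1 = q'.1 := σ.injective (by exact hpq)
    rw [h p' hp' q' hq' this]

lemma map_delta {C : Type*} [DecidableEq C] (σ : Equiv.Perm (Fin m))
    (S : Finset (Fin m × C)) (c : C) :
    deltaS (S.map (permEmb σ)) c = deltaS S c := by
  unfold deltaS
  rw [Finset.filter_map, Finset.card_map]
  rfl

lemma PE_ymon_map (k : ℕ)
    (PE : CubeQuot (Fin (3 * k) × Fin 6) →ₗ[ℝ] ℝ)
    (hPE : ∀ S : Finset (Fin (3 * k) × Fin 6),
      PE (mkC (ymon S)) =
        if IsPartialSchedule S ∧ S.card ≤ k / 2 then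
          (ffall (3 * k : ℝ) S.card)⁻¹ * ∏ j : Fin 6, ffall ((k : ℝ) / 2) (deltaS S j)
        else 0)
    (σ : Equiv.Perm (Fin (3 * k))) (S : Finset (Fin (3 * k) × Fin 6)) :
    PE (mkC (ymon (S.map (permEmb σ)))) = PE (mkC (ymon S)) := by
  rw [hPE, hPE]
  simp only [Finset.card_map, map_delta]
  have hps : IsPartialSchedule (S.map (permEmb σ)) = IsPartialSchedule S :=
    propext (map_partial σ S)
  simp only [hps]

end Helpers

/-- The linear functional on `ℝ[y]/I_E` (`E = [3k] × {C₁,…,C₆}`) defined on square-free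
monomials by `Ẽ(y_S) = (1/(3k)_{|S|}) ∏_j (k/2)_{δ_S(C_j)}` for partial schedules `S` with
`|S| ≤ ⌊k/2⌋` and `0` otherwise, is `S_{3k}`-symmetric. -/
theorem pseudoexpectation_symmetric (k : ℕ) (hk : Odd k) (hkpos : 0 < k)
    (PE : CubeQuot (Fin (3 * k) × Fin 6) →ₗ[ℝ] ℝ)
    (hPE : ∀ S : Finset (Fin (3 * k) × Fin 6),
      PE (mkC (ymon S)) =
        if IsPartialSchedule S ∧ S.card ≤ k / 2 then
          (ffall (3 * k : ℝ) S.card)⁻¹ * ∏ j : Fin 6, ffall ((k : ℝ) / 2) (deltaS S j)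
        else 0) :
    ∀ f : MvPolynomial (Fin (3 * k) × Fin 6) ℝ, PE (mkC f) = PE (mkC (symPoly f)) := by
  intro f
  have key : ∀ σ : Equiv.Perm (Fin (3 * k)),
      ∀ g : MvPolynomial (Fin (3 * k) × Fin 6) ℝ,
      PE (mkC (permAct σ g)) = PE (mkC g) := by
    intro σ g
    induction g using MvPolynomial.induction_on' with
    | monomial d c =>
      have h1 : permAct σ (monomial d c)
          = monomial (d.mapDomain (permEmb σ)) c := rename_monomial _ _ _
      have hc : ∀ d' : (Fin (3 * k) × Fin 6) →₀ ℕ,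
          PE (mkC (monomial d' c)) = c * PE (mkC (ymon d'.support)) := by
        intro d'
        have h2 : monomial d' c = c • monomial d' (1 : ℝ) := by
          rw [smul_monomial, smul_eq_mul, mul_one]
        rw [h2, mkC_smul, map_smul, mkC_monomial, smul_eq_mul]
      have hsup : (d.mapDomain (permEmb σ)).support = d.support.map (permEmb σ) := by
        rw [← Finsupp.embDomain_eq_mapDomain, Finsupp.support_embDomain]
      rw [h1, hc, hc, hsup, PE_ymon_map k PE hPE σ]
    | add p q hp hq =>
      have : permAct σ (p + q) = permAct σ p + permAct σ q := map_add (rename _) p q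
      rw [this, map_add, map_add, map_add, map_add, hp, hq]
  have hfac : ((3 * k).factorial : ℝ) ≠ 0 :=
    Nat.cast_ne_zero.2 (Nat.factorial_pos _).ne'
  rw [symPoly, mkC_smul, map_smul, map_sum, map_sum]
  rw [Finset.sum_congr rfl fun σ _ => key σ f]
  rw [Finset.sum_const, Finset.card_univ, Fintype.card_perm, Fintype.card_fin,
    nsmul_eq_mul, smul_eq_mul, ← mul_assoc, inv_mul_cancel₀ hfac, one_mul]
end
end

section
/- Let T, R, S ⊆ [3k] × 𝒞 be partial schedules whose machine sets ℳ(T), ℳ(R), ℳ(S) are pairwise disjoint. Then Ẽ_T(R ∪ S) = Ẽ_T(R) · Ẽ_{T∪R}(S). In particular, taking T = ∅: for machine-disjoint partial schedules T' and S', Ẽ(T' ∪ S') = Ẽ_{T'}(S') · Ẽ(T'). -/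
noncomputable section
open scoped Classical

/-- The machine set `ℳ(S)` of `S`. -/
def machSet {m : ℕ} {C : Type*} (S : Finset (Fin m × C)) : Finset (Fin m) :=
  S.image Prod.fst

/-- The conditional pseudoexpectation value
`Ẽ_T(S) = (1/(3k − |T|)_{|S|}) · ∏_{j=1}^{6} (k/2 − δ_T(C_j))_{δ_S(C_j)}`
if `S` is a partial schedule, and `0` otherwise. -/
def pexp (k : ℕ) (T S : Finset (Fin (3 * k) × Fin 6)) : ℝ :=
  if IsPartialSchedule S then
    (ffall ((3 * k : ℝ) - T.card) S.card)⁻¹ *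
      ∏ j : Fin 6, ffall ((k : ℝ) / 2 - deltaS T j) (deltaS S j)
  else 0

/-- A profile `γ : 𝒞 → ℕ` has norm `‖γ‖ = Σ_C γ(C)`. -/
def pnorm (γ : Fin 6 → ℕ) : ℕ := ∑ c : Fin 6, γ c

/-- `ℱ(T,γ)`: partial schedules `A` with `ℳ(A) ⊆ [m] ∖ ℳ(T)` in `γ`-profile. -/
def extFam (k : ℕ) (T : Finset (Fin (3 * k) × Fin 6)) (γ : Fin 6 → ℕ) :
    Finset (Finset (Fin (3 * k) × Fin 6)) :=
  Finset.univ.filter fun A =>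
    IsPartialSchedule A ∧ Disjoint (machSet A) (machSet T) ∧ ∀ c, deltaS A c = γ c


lemma ffall_add (a : ℕ) : ∀ (x : ℝ) (b : ℕ), ffall x (a + b) = ffall x a * ffall (x - a) b := by
  induction a with
  | zero => intro x b; simp [ffall]
  | succ n ih =>
    intro x b
    have h1 : n + 1 + b = (n + b) + 1 := by omega
    rw [h1]
    show x * ffall (x - 1) (n + b) = (x * ffall (x - 1) n) * ffall (x - (n + 1 : ℕ)) b
    rw [ih (x - 1) b]
    have h2 : (x - 1) - (n : ℕ) = x - ((n + 1 : ℕ) : ℝ) := by push_cast; ring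
    rw [h2]; ring

lemma disj_of_mach {m : ℕ} {C : Type*} {R S : Finset (Fin m × C)}
    (h : Disjoint (machSet R) (machSet S)) : Disjoint R S := by
  rw [Finset.disjoint_left] at h ⊢
  intro p hpR hpS
  exact h (Finset.mem_image_of_mem _ hpR) (Finset.mem_image_of_mem _ hpS)

lemma deltaS_union {m : ℕ} {C : Type*} [DecidableEq C] {R S : Finset (Fin m × C)}
    (h : Disjoint R S) (c : C) : deltaS (R ∪ S) c = deltaS R c + deltaS S c := by
  unfold deltaS
  rw [Finset.filter_union, Finset.card_union_of_disjoint
    (Finset.disjoint_filter_filter h)]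

lemma isPS_union {m : ℕ} {C : Type*} [DecidableEq C] {R S : Finset (Fin m × C)}
    (hR : IsPartialSchedule R) (hS : IsPartialSchedule S)
    (h : Disjoint (machSet R) (machSet S)) : IsPartialSchedule (R ∪ S) := by
  intro p hp q hq hpq
  rw [Finset.mem_union] at hp hq
  rw [Finset.disjoint_left] at h
  rcases hp with hp | hp <;> rcases hq with hq | hq
  · exact hR p hp q hq hpq
  · have h1 : p.1 ∈ machSet R := Finset.mem_image_of_mem _ hp
    have h2 : p.1 ∈ machSet S := by
      rw [hpq]; exact Finset.mem_image_of_mem _ hq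
    exact absurd h2 (h h1)
  · have h1 : p.1 ∈ machSet R := by
      rw [hpq]; exact Finset.mem_image_of_mem _ hq
    have h2 : p.1 ∈ machSet S := Finset.mem_image_of_mem _ hp
    exact absurd h2 (h h1)
  · exact hS p hp q hq hpq

lemma pexp_union_key (k : ℕ) (T R S : Finset (Fin (3 * k) × Fin 6))
    (hR : IsPartialSchedule R) (hS : IsPartialSchedule S)
    (hTR : Disjoint (machSet T) (machSet R))
    (hRS : Disjoint (machSet R) (machSet S)) :
    pexp k T (R ∪ S) = pexp k T R * pexp k (T ∪ R) S := by
  have hdRS : Disjoint R S := disj_of_mach hRS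
  have hdTR : Disjoint T R := disj_of_mach hTR
  have hPS : IsPartialSchedule (R ∪ S) := isPS_union hR hS hRS
  unfold pexp
  rw [if_pos hPS, if_pos hR, if_pos hS]
  rw [Finset.card_union_of_disjoint hdRS, Finset.card_union_of_disjoint hdTR]
  rw [ffall_add]
  have hprod : ∏ j : Fin 6, ffall ((k : ℝ) / 2 - deltaS T j) (deltaS (R ∪ S) j)
      = (∏ j : Fin 6, ffall ((k : ℝ) / 2 - deltaS T j) (deltaS R j)) *
        ∏ j : Fin 6, ffall ((k : ℝ) / 2 - deltaS (T ∪ R) j) (deltaS S j) := by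
    rw [← Finset.prod_mul_distrib]
    apply Finset.prod_congr rfl
    intro j _
    rw [deltaS_union hdRS, deltaS_union hdTR, ffall_add]
    congr 1
    push_cast; ring
  rw [hprod]
  have hc : (3 * k : ℝ) - ((T.card + R.card : ℕ) : ℝ)
      = ((3 * k : ℝ) - T.card) - R.card := by push_cast; ring
  rw [hc, mul_inv]
  ring

/-- For partial schedules `T, R, S` with pairwise disjoint machine sets:
`Ẽ_T(R ∪ S) = Ẽ_T(R) · Ẽ_{T∪R}(S)`; in particular, taking `T = ∅`, for machine-disjoint
partial schedules `T'` and `S'`, `Ẽ(T' ∪ S') = Ẽ_{T'}(S') · Ẽ(T')`. -/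
theorem pexp_union (k : ℕ) (hk : Odd k) (hkpos : 0 < k)
    (T R S : Finset (Fin (3 * k) × Fin 6))
    (hT : IsPartialSchedule T) (hR : IsPartialSchedule R) (hS : IsPartialSchedule S)
    (hTR : Disjoint (machSet T) (machSet R))
    (hTS : Disjoint (machSet T) (machSet S))
    (hRS : Disjoint (machSet R) (machSet S)) :
    pexp k T (R ∪ S) = pexp k T R * pexp k (T ∪ R) S ∧
    ∀ T' S' : Finset (Fin (3 * k) × Fin 6),
      IsPartialSchedule T' → IsPartialSchedule S' →
      Disjoint (machSet T') (machSet S') →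
      pexp k ∅ (T' ∪ S') = pexp k T' S' * pexp k ∅ T' := by
  constructor
  · exact pexp_union_key k T R S hR hS hTR hRS
  · intro T' S' hT' hS' hd
    have hdis : Disjoint (machSet (∅ : Finset (Fin (3 * k) × Fin 6))) (machSet T') := by
      simp [machSet]
    have h2 := pexp_union_key k ∅ T' S' hT' hS' hdis hd
    rw [Finset.empty_union] at h2
    rw [h2, mul_comm]
end
end

section
/- Let T ⊆ [3k] × 𝒞 be a partial schedule and γ : 𝒞 → ℕ a profile with |T| + ‖γ‖ ≤ k/2. Then Σ_{A ∈ ℱ(T,γ)} Ẽ_T(A) = ∏_{j=1}^{6} (1/γ(C_j)!) · (k/2 − δ_T(C_j))_{γ(C_j)}. -/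
noncomputable section
open scoped Classical

lemma ffall_succ (x : ℝ) (n : ℕ) : ffall x (n+1) = x * ffall (x-1) n := rfl

lemma mem_machSet {m : ℕ} {C : Type*} {S : Finset (Fin m × C)} {i : Fin m} :
    i ∈ machSet S ↔ ∃ c, (i, c) ∈ S := by
  simp only [machSet, Finset.mem_image]
  constructor
  · rintro ⟨⟨a, b⟩, hab, rfl⟩; exact ⟨b, hab⟩
  · rintro ⟨c, hc⟩; exact ⟨(i, c), hc, rfl⟩

lemma card_eq_sum_deltaS {m : ℕ} (S : Finset (Fin m × Fin 6)) :
    S.card = ∑ c : Fin 6, deltaS S c :=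
  Finset.card_eq_sum_card_fiberwise (f := Prod.snd) (fun x _ => Finset.mem_univ x.2)

lemma isPartialSchedule_subset {m : ℕ} {C : Type*} {A B : Finset (Fin m × C)}
    (h : A ⊆ B) (hB : IsPartialSchedule B) : IsPartialSchedule A :=
  fun p hp q hq hpq => hB p (h hp) q (h hq) hpq

lemma isPartialSchedule_insert {m : ℕ} {C : Type*} [DecidableEq C] {S : Finset (Fin m × C)}
    {i : Fin m} {c : C} (hi : i ∉ machSet S) (hS : IsPartialSchedule S) :
    IsPartialSchedule (insert (i, c) S) := by
  intro p hp q hq hpq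
  rcases Finset.mem_insert.1 hp with rfl | hp
  · rcases Finset.mem_insert.1 hq with rfl | hq
    · rfl
    · exact absurd (mem_machSet.2 ⟨q.2, by rw [show i = q.1 from hpq]; simpa using hq⟩) hi
  · rcases Finset.mem_insert.1 hq with rfl | hq
    · exact absurd (mem_machSet.2 ⟨p.2, by rw [show i = p.1 from hpq.symm]; simpa using hp⟩) hi
    · exact hS p hp q hq hpq

lemma machSet_insert {m : ℕ} {C : Type*} [DecidableEq C] {S : Finset (Fin m × C)} {i : Fin m} {c : C} :
    machSet (insert (i, c) S) = insert i (machSet S) := Finset.image_insert _ _ _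

lemma machSet_card {m : ℕ} {C : Type*} {S : Finset (Fin m × C)}
    (hS : IsPartialSchedule S) : (machSet S).card = S.card :=
  Finset.card_image_of_injOn (fun p hp q hq h => hS p hp q hq h)

lemma deltaS_insert {m : ℕ} {C : Type*} [DecidableEq C] {S : Finset (Fin m × C)}
    {e : Fin m × C} (he : e ∉ S) (j : C) :
    deltaS (insert e S) j = deltaS S j + if e.2 = j then 1 else 0 := by
  unfold deltaS
  rw [Finset.filter_insert]
  split_ifs with h
  · rw [Finset.card_insert_of_notMem (fun hmem => he (Finset.mem_filter.1 hmem).1)]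
  · rfl

lemma mem_extFam {k : ℕ} {T A : Finset (Fin (3 * k) × Fin 6)} {γ : Fin 6 → ℕ} :
    A ∈ extFam k T γ ↔
      IsPartialSchedule A ∧ Disjoint (machSet A) (machSet T) ∧ ∀ c, deltaS A c = γ c := by
  simp [extFam]

lemma pexp_insert (k : ℕ) (T A : Finset (Fin (3 * k) × Fin 6)) (i : Fin (3 * k)) (c : Fin 6)
    (hA : IsPartialSchedule A) (hiA : i ∉ machSet A) (hiT : i ∉ machSet T) :
    pexp k T (insert (i, c) A) =
      ((k : ℝ) / 2 - deltaS T c) / ((3 * k : ℝ) - T.card) * pexp k (insert (i, c) T) A := by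
  have heA : (i, c) ∉ A := fun h => hiA (mem_machSet.2 ⟨c, h⟩)
  have heT : (i, c) ∉ T := fun h => hiT (mem_machSet.2 ⟨c, h⟩)
  have hPS : IsPartialSchedule (insert (i, c) A) := isPartialSchedule_insert hiA hA
  rw [pexp, pexp, if_pos hPS, if_pos hA]
  rw [Finset.card_insert_of_notMem heA, Finset.card_insert_of_notMem heT, ffall_succ]
  have hterm : ∀ j : Fin 6, ffall ((k : ℝ) / 2 - deltaS T j) (deltaS (insert (i, c) A) j)
      = (if c = j then ((k : ℝ) / 2 - deltaS T c) else 1) *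
        ffall ((k : ℝ) / 2 - deltaS (insert (i, c) T) j) (deltaS A j) := by
    intro j
    rw [deltaS_insert heA, deltaS_insert heT]
    by_cases h : c = j
    · subst h
      simp only [eq_self_iff_true, if_true]
      rw [ffall_succ]
      congr 2 <;> push_cast <;> ring
    · have h2 : ((i, c).2 = j) = False := by simp [h]
      simp only [h, if_false, h2, if_false, add_zero, one_mul]
  rw [Finset.prod_congr rfl (fun j _ => hterm j), Finset.prod_mul_distrib,
    Finset.prod_ite_eq, if_pos (Finset.mem_univ c)]
  have harg : ((3 * k : ℝ) - ((T.card + 1 : ℕ) : ℝ)) = (3 * k : ℝ) - T.card - 1 := by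
    push_cast; ring
  rw [harg, mul_inv]
  ring

lemma not_mem_machSet_erase {m : ℕ} {C : Type*} [DecidableEq C]
    {A : Finset (Fin m × C)} (hA : IsPartialSchedule A) {e : Fin m × C} (he : e ∈ A) :
    e.1 ∉ machSet (A.erase e) := by
  intro h
  obtain ⟨c', hc'⟩ := mem_machSet.1 h
  have hmem := Finset.mem_erase.1 hc'
  exact hmem.1 (hA _ hmem.2 e he rfl)

lemma machSet_erase_subset {m : ℕ} {C : Type*} [DecidableEq C] {A : Finset (Fin m × C)} (e : Fin m × C) :
    machSet (A.erase e) ⊆ machSet A :=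
  Finset.image_subset_image (Finset.erase_subset _ _)

set_option maxHeartbeats 2000000 in
lemma key_identity (k : ℕ) (T : Finset (Fin (3 * k) × Fin 6)) (γ : Fin 6 → ℕ)
    (c : Fin 6) (hc : γ c ≠ 0) (f : Finset (Fin (3 * k) × Fin 6) → ℝ) :
    ∑ i ∈ Finset.univ \ machSet T,
        ∑ A' ∈ extFam k (insert (i, c) T) (Function.update γ c (γ c - 1)),
          f (insert (i, c) A')
      = ∑ A ∈ extFam k T γ, (γ c : ℝ) * f A := by
  set γ' := Function.update γ c (γ c - 1) with hγ'
  have hγ'c : γ' c = γ c - 1 := by simp [hγ']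
  have hγ'j : ∀ j, j ≠ c → γ' j = γ j := by intro j hj; simp [hγ', Function.update, hj]
  rw [Finset.sum_sigma' (Finset.univ \ machSet T)
    (fun i => extFam k (insert (i, c) T) γ') (fun i A' => f (insert (i, c) A'))]
  have hr : ∀ A ∈ extFam k T γ,
      (γ c : ℝ) * f A = ∑ _e ∈ A.filter (fun e => e.2 = c), f A := by
    intro A hA
    rw [Finset.sum_const, nsmul_eq_mul]
    have : (A.filter (fun e => e.2 = c)).card = γ c := (mem_extFam.1 hA).2.2 c
    rw [this]
  rw [Finset.sum_congr rfl hr,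
    Finset.sum_sigma' (extFam k T γ) (fun A => A.filter (fun e => e.2 = c)) (fun A _e => f A)]
  apply Finset.sum_nbij' (i := fun p => ⟨insert (p.1, c) p.2, (p.1, c)⟩)
    (j := fun q => ⟨q.2.1, q.1.erase q.2⟩)
  · -- forward membership
    rintro ⟨i, A'⟩ hp
    rw [Finset.mem_sigma] at hp
    dsimp only at hp ⊢
    obtain ⟨hi, hA'⟩ := hp
    obtain ⟨hps, hdisj, hδ⟩ := mem_extFam.1 hA'
    rw [machSet_insert, Finset.disjoint_insert_right] at hdisj
    have hiT : i ∉ machSet T := (Finset.mem_sdiff.1 hi).2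
    have hiA' : i ∉ machSet A' := hdisj.1
    have heA' : (i, c) ∉ A' := fun h => hiA' (mem_machSet.2 ⟨c, h⟩)
    rw [Finset.mem_sigma]
    dsimp only
    constructor
    · rw [mem_extFam]
      refine ⟨isPartialSchedule_insert hiA' hps, ?_, ?_⟩
      · rw [machSet_insert, Finset.disjoint_insert_left]
        exact ⟨hiT, hdisj.2⟩
      · intro j
        rw [deltaS_insert heA', hδ j]
        by_cases hj : c = j
        · subst hj
          rw [if_pos rfl, hγ'c]
          exact Nat.succ_pred_eq_of_pos (Nat.pos_of_ne_zero hc)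
        · rw [if_neg (show ¬(((i, c) : Fin (3 * k) × Fin 6).2 = j) from hj),
            add_zero, hγ'j j (fun h => hj h.symm)]
    · exact Finset.mem_filter.2 ⟨Finset.mem_insert_self _ _, rfl⟩
  · -- backward membership
    rintro ⟨A, e⟩ hq
    rw [Finset.mem_sigma] at hq
    dsimp only at hq ⊢
    obtain ⟨hA, he⟩ := hq
    obtain ⟨hps, hdisj, hδ⟩ := mem_extFam.1 hA
    obtain ⟨heA, hec⟩ := Finset.mem_filter.1 he
    have he1A : e.1 ∈ machSet A := mem_machSet.2 ⟨e.2, by simpa using heA⟩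
    have he1T : e.1 ∉ machSet T := Finset.disjoint_left.1 hdisj he1A
    rw [Finset.mem_sigma]
    dsimp only
    constructor
    · exact Finset.mem_sdiff.2 ⟨Finset.mem_univ _, he1T⟩
    · rw [mem_extFam]
      refine ⟨isPartialSchedule_subset (Finset.erase_subset _ _) hps, ?_, ?_⟩
      · rw [machSet_insert, Finset.disjoint_insert_right]
        exact ⟨not_mem_machSet_erase hps heA,
          Finset.disjoint_of_subset_left (machSet_erase_subset e) hdisj⟩
      · intro j
        unfold deltaS
        rw [Finset.filter_erase]
        by_cases hj : c = j
        · have hef : e ∈ Finset.filter (fun e => e.2 = j) A :=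
            Finset.mem_filter.2 ⟨heA, hec.trans hj⟩
          rw [Finset.card_erase_of_mem hef,
            show (Finset.filter (fun e => e.2 = j) A).card = γ j from hδ j, ← hj, hγ'c, hj]
        · rw [Finset.erase_eq_of_notMem
            (fun h => hj ((Finset.mem_filter.1 h).2.symm.trans hec).symm)]
          exact (hδ j).trans (hγ'j j (fun h => hj h.symm)).symm
  · -- left inverse
    rintro ⟨i, A'⟩ hp
    rw [Finset.mem_sigma] at hp
    obtain ⟨hi, hA'⟩ := hp
    obtain ⟨_, hdisj, _⟩ := mem_extFam.1 hA'
    rw [machSet_insert, Finset.disjoint_insert_right] at hdisj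
    have heA' : (i, c) ∉ A' := fun h => hdisj.1 (mem_machSet.2 ⟨c, h⟩)
    dsimp only
    rw [Finset.erase_insert heA']
  · -- right inverse
    rintro ⟨A, e⟩ hq
    rw [Finset.mem_sigma] at hq
    obtain ⟨_, he⟩ := hq
    obtain ⟨heA, hec⟩ := Finset.mem_filter.1 he
    have hee : ((e.1, c) : Fin (3 * k) × Fin 6) = e := by rw [← hec]
    dsimp only
    rw [hee, Finset.insert_erase heA]
  · rintro ⟨i, A'⟩ _
    rfl

lemma extFam_zero (k : ℕ) (T : Finset (Fin (3 * k) × Fin 6)) (γ : Fin 6 → ℕ)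
    (hγ : ∀ c, γ c = 0) : extFam k T γ = {∅} := by
  ext A
  rw [mem_extFam, Finset.mem_singleton]
  constructor
  · rintro ⟨-, -, hδ⟩
    have : A.card = 0 := by
      rw [card_eq_sum_deltaS]
      exact Finset.sum_eq_zero fun c _ => (hδ c).trans (hγ c)
    exact Finset.card_eq_zero.1 this
  · rintro rfl
    refine ⟨fun p hp => absurd hp (Finset.notMem_empty p), ?_, fun c => ?_⟩
    · simp [machSet]
    · simp [deltaS, hγ c]

lemma pexp_empty (k : ℕ) (T : Finset (Fin (3 * k) × Fin 6)) : pexp k T ∅ = 1 := by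
  have h : IsPartialSchedule (∅ : Finset (Fin (3 * k) × Fin 6)) :=
    fun p hp => absurd hp (Finset.notMem_empty p)
  rw [pexp, if_pos h]
  simp [deltaS, ffall]

/-- For a partial schedule `T` and profile `γ` with `|T| + ‖γ‖ ≤ k/2`:
`Σ_{A ∈ ℱ(T,γ)} Ẽ_T(A) = ∏_{j=1}^{6} (1/γ(C_j)!) · (k/2 − δ_T(C_j))_{γ(C_j)}`. -/
theorem sum_pexp_extFam (k : ℕ) (hk : Odd k) (hkpos : 0 < k)
    (T : Finset (Fin (3 * k) × Fin 6)) (hT : IsPartialSchedule T)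
    (γ : Fin 6 → ℕ)
    (hsize : (T.card : ℝ) + (pnorm γ : ℝ) ≤ (k : ℝ) / 2) :
    ∑ A ∈ extFam k T γ, pexp k T A =
      ∏ j : Fin 6, ((γ j).factorial : ℝ)⁻¹ * ffall ((k : ℝ) / 2 - deltaS T j) (γ j) := by
  clear hk
  suffices H : ∀ n : ℕ, ∀ T : Finset (Fin (3 * k) × Fin 6), ∀ γ : Fin 6 → ℕ,
      IsPartialSchedule T → pnorm γ = n → ((T.card : ℝ) + (pnorm γ : ℝ) ≤ (k : ℝ) / 2) →
      ∑ A ∈ extFam k T γ, pexp k T A =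
        ∏ j : Fin 6, ((γ j).factorial : ℝ)⁻¹ * ffall ((k : ℝ) / 2 - deltaS T j) (γ j) by
    exact H (pnorm γ) T γ hT rfl hsize
  intro n
  induction n with
  | zero =>
    intro T γ hT hγ0 _
    have hγ : ∀ c, γ c = 0 := fun c =>
      Finset.sum_eq_zero_iff.1 hγ0 c (Finset.mem_univ c)
    rw [extFam_zero k T γ hγ, Finset.sum_singleton, pexp_empty]
    symm
    apply Finset.prod_eq_one
    intro j _
    rw [hγ j]
    simp [ffall]
  | succ n ih =>
    intro T γ hT hγn hsize
    obtain ⟨c, hc⟩ : ∃ c, γ c ≠ 0 := by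
      by_contra h
      push_neg at h
      have h0 : pnorm γ = 0 := Finset.sum_eq_zero fun c _ => h c
      omega
    set γ' := Function.update γ c (γ c - 1) with hγ'def
    have hγ'c : γ' c = γ c - 1 := by simp [hγ'def]
    have hγ'j : ∀ j, j ≠ c → γ' j = γ j := fun j hj => by
      simp [hγ'def, Function.update, hj]
    have hpn' : pnorm γ' = n := by
      have h1 : γ c + ∑ j ∈ Finset.univ.erase c, γ j = pnorm γ :=
        Finset.add_sum_erase _ _ (Finset.mem_univ c)
      have h2 : γ' c + ∑ j ∈ Finset.univ.erase c, γ' j = pnorm γ' :=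
        Finset.add_sum_erase _ _ (Finset.mem_univ c)
      have h3 : ∑ j ∈ Finset.univ.erase c, γ' j = ∑ j ∈ Finset.univ.erase c, γ j :=
        Finset.sum_congr rfl fun j hj => hγ'j j (Finset.mem_erase.1 hj).1
      rw [h3, hγ'c] at h2
      omega
    have hTR : (T.card : ℝ) + ((n : ℝ) + 1) ≤ (k : ℝ) / 2 := by
      rw [hγn] at hsize
      push_cast at hsize
      linarith
    have hk1 : (1 : ℝ) ≤ (k : ℝ) := by exact_mod_cast hkpos
    have hn0' : (0 : ℝ) < (3 * k : ℝ) - T.card := by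
      have h3 : (0 : ℝ) ≤ n := Nat.cast_nonneg n
      linarith
    have hn0 : ((3 * k : ℝ) - T.card) ≠ 0 := ne_of_gt hn0'
    have hkey := key_identity k T γ c hc (pexp k T)
    set P' : ℝ := ∏ j : Fin 6, ((γ' j).factorial : ℝ)⁻¹ *
        ffall ((k : ℝ) / 2 - ((deltaS T j + if c = j then 1 else 0 : ℕ) : ℝ)) (γ' j)
      with hP'
    have hinner : ∀ i ∈ Finset.univ \ machSet T,
        ∑ A' ∈ extFam k (insert (i, c) T) γ', pexp k T (insert (i, c) A')
          = ((k : ℝ) / 2 - deltaS T c) / ((3 * k : ℝ) - T.card) * P' := by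
      intro i hi
      have hiT : i ∉ machSet T := (Finset.mem_sdiff.1 hi).2
      have hicT : (i, c) ∉ T := fun h => hiT (mem_machSet.2 ⟨c, h⟩)
      have hstep : ∀ A' ∈ extFam k (insert (i, c) T) γ',
          pexp k T (insert (i, c) A')
            = ((k : ℝ) / 2 - deltaS T c) / ((3 * k : ℝ) - T.card) *
              pexp k (insert (i, c) T) A' := by
        intro A' hA'
        obtain ⟨hps, hdisj, -⟩ := mem_extFam.1 hA'
        rw [machSet_insert, Finset.disjoint_insert_right] at hdisj
        exact pexp_insert k T A' i c hps hdisj.1 hiT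
      rw [Finset.sum_congr rfl hstep, ← Finset.mul_sum]
      congr 1
      have hTps : IsPartialSchedule (insert (i, c) T) := isPartialSchedule_insert hiT hT
      have hcard : (insert (i, c) T).card = T.card + 1 := Finset.card_insert_of_notMem hicT
      have hsz : (((insert (i, c) T).card : ℕ) : ℝ) + (pnorm γ' : ℝ) ≤ (k : ℝ) / 2 := by
        rw [hcard, hpn']
        push_cast
        linarith
      rw [ih (insert (i, c) T) γ' hTps hpn' hsz, hP']
      apply Finset.prod_congr rfl
      intro j _
      rw [deltaS_insert hicT j]
    rw [Finset.sum_congr rfl hinner, Finset.sum_const, nsmul_eq_mul, ← Finset.mul_sum] at hkey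
    have hTle : T.card ≤ 3 * k := by
      have : (T.card : ℝ) ≤ (3 * k : ℝ) := le_of_lt (by linarith)
      exact_mod_cast this
    have hcardM : (((Finset.univ \ machSet T).card : ℕ) : ℝ) = (3 * k : ℝ) - T.card := by
      rw [Finset.card_sdiff_of_subset (Finset.subset_univ _), machSet_card hT, Finset.card_univ,
        Fintype.card_fin, Nat.cast_sub hTle]
      push_cast
      ring
    rw [hcardM] at hkey
    have hγcR : ((γ c : ℕ) : ℝ) ≠ 0 := Nat.cast_ne_zero.2 hc
    apply mul_left_cancel₀ hγcR
    rw [← hkey]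
    have hcollapse : ((3 * k : ℝ) - T.card) *
        (((k : ℝ) / 2 - deltaS T c) / ((3 * k : ℝ) - T.card) * P')
        = ((k : ℝ) / 2 - deltaS T c) * P' := by
      field_simp
    rw [hcollapse, hP']
    rw [← Finset.mul_prod_erase Finset.univ _ (Finset.mem_univ c),
      ← Finset.mul_prod_erase Finset.univ
        (fun j => ((γ j).factorial : ℝ)⁻¹ * ffall ((k : ℝ) / 2 - deltaS T j) (γ j))
        (Finset.mem_univ c)]
    have herase : ∀ j ∈ Finset.univ.erase c,
        ((γ' j).factorial : ℝ)⁻¹ *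
          ffall ((k : ℝ) / 2 - ((deltaS T j + if c = j then 1 else 0 : ℕ) : ℝ)) (γ' j)
        = ((γ j).factorial : ℝ)⁻¹ * ffall ((k : ℝ) / 2 - deltaS T j) (γ j) := by
      intro j hj
      have hjc : j ≠ c := (Finset.mem_erase.1 hj).1
      rw [hγ'j j hjc, if_neg (fun h => hjc h.symm), add_zero]
    rw [Finset.prod_congr rfl herase]
    obtain ⟨d, hd⟩ : ∃ d, γ c = d + 1 :=
      ⟨γ c - 1, (Nat.succ_pred_eq_of_pos (Nat.pos_of_ne_zero hc)).symm⟩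
    have hγ'cd : γ' c = d := by rw [hγ'c, hd]; omega
    rw [hγ'cd, hd, if_pos rfl]
    have hfac : ((d + 1).factorial : ℝ) = ((d : ℝ) + 1) * (d.factorial : ℝ) := by
      rw [Nat.factorial_succ]
      push_cast
      ring
    have harg : ((k : ℝ) / 2 - ((deltaS T c + 1 : ℕ) : ℝ)) = (k : ℝ) / 2 - deltaS T c - 1 := by
      push_cast
      ring
    rw [harg, ffall_succ, hfac]
    have hdfac : (d.factorial : ℝ) ≠ 0 := Nat.cast_ne_zero.2 (Nat.factorial_ne_zero d)
    have hd1 : ((d : ℝ) + 1) ≠ 0 := by positivity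
    push_cast
    field_simp
end
end

section
/- In every integral solution x of assign(B,T), for every machine i ∈ {1,…,m−1} we have conf_i(x) ≥_lex conf_{i+1}(x), i.e., either conf_i(x) = conf_{i+1}(x) or conf_{i+1}(x) <_lex conf_i(x). -/
noncomputable section
open scoped Classical
open Finset

/-- The class `J_q` of long jobs whose processing time lies in
`[(1/ε + q − 1)·ε²T, (1/ε + q)·ε²T)`. -/
def Jq {ι : Type*} [Fintype ι] (p : ι → ℝ) (ε T : ℝ) (q : ℕ) : Finset ι :=
  Finset.univ.filter fun j =>
    (1 / ε + (q : ℝ) - 1) * ε ^ 2 * T ≤ p j ∧ p j < (1 / ε + (q : ℝ)) * ε ^ 2 * T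

/-- `conf_i(x)(q) = Σ_{j ∈ J_q} x_{ij}`, the number of jobs of class `q` on machine `i`. -/
def conf {ι : Type*} [Fintype ι] (p : ι → ℝ) (ε T : ℝ) (x : ℕ → ι → ℕ) (i q : ℕ) : ℕ :=
  ∑ j ∈ Jq p ε T q, x i j

/-- `C <_lex C'` on the index range `{1,…,s}`. -/
def LexLt (s : ℕ) (C C' : ℕ → ℕ) : Prop :=
  ∃ q ∈ Finset.Icc 1 s, (∀ ℓ ∈ Finset.Icc 1 s, ℓ < q → C ℓ = C' ℓ) ∧ C q < C' q

/-- In every integral solution of `assign(B,T)`, the machine configurations are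
lexicographically non-increasing: `conf_i(x) ≥_lex conf_{i+1}(x)` for `i ∈ {1,…,m−1}`. -/
theorem integral_solution_lex_sorted {ι : Type*} [Fintype ι]
    (m s : ℕ) (ε T : ℝ) (p : ι → ℝ)
    (hp : ∀ j, 0 < p j) (hT : 0 < T)
    (hε0 : 0 < ε) (hε1 : ε < 1) (hεint : ∃ t : ℤ, ε * (t : ℝ) = 1)
    (hs : (s : ℝ) = (1 - ε) / ε ^ 2)
    (B : ℕ) (hB : B = 1 + 2 * s * ((Finset.Icc 1 s).sup fun q => (Jq p ε T q).card))
    (x : ℕ → ι → ℕ) (hx01 : ∀ i j, x i j ≤ 1)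
    (hassign : ∀ j : ι, ∑ i ∈ Finset.Icc 1 m, x i j = 1)
    (hload : ∀ i ∈ Finset.Icc 1 m, ∑ j : ι, (x i j : ℝ) * p j ≤ T)
    (hsym : ∀ i ∈ Finset.Icc 1 (m - 1),
      0 ≤ ∑ q ∈ Finset.Icc 1 s,
            (B : ℤ) ^ (s - q) * ∑ j ∈ Jq p ε T q, ((x i j : ℤ) - (x (i + 1) j : ℤ))) :
    ∀ i ∈ Finset.Icc 1 (m - 1),
      (∀ q ∈ Finset.Icc 1 s, conf p ε T x i q = conf p ε T x (i + 1) q) ∨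
        LexLt s (conf p ε T x (i + 1)) (conf p ε T x i) := by
  intro i hi
  set M : ℕ := (Finset.Icc 1 s).sup fun q => (Jq p ε T q).card with hM
  set d : ℕ → ℤ := fun q => ∑ j ∈ Jq p ε T q, ((x i j : ℤ) - (x (i+1) j : ℤ)) with hd
  have hB1 : 1 ≤ B := by omega
  have hBZ : (1:ℤ) ≤ (B:ℤ) := by exact_mod_cast hB1
  have hdabs : ∀ q ∈ Finset.Icc 1 s, |d q| ≤ (M : ℤ) := by
    intro q hq
    calc |d q| ≤ ∑ j ∈ Jq p ε T q, |(x i j : ℤ) - (x (i+1) j : ℤ)| :=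
          Finset.abs_sum_le_sum_abs _ _
      _ ≤ ∑ j ∈ Jq p ε T q, 1 := Finset.sum_le_sum (fun j _ => by
            have h1 := hx01 i j; have h2 := hx01 (i+1) j
            rw [abs_le]; omega)
      _ = ((Jq p ε T q).card : ℤ) := by simp
      _ ≤ (M : ℤ) := by exact_mod_cast Finset.le_sup (f := fun q => (Jq p ε T q).card) hq
  have hconf : ∀ q, ((conf p ε T x i q : ℤ) - (conf p ε T x (i+1) q : ℤ)) = d q := by
    intro q
    simp only [conf, hd, Finset.sum_sub_distrib]
    push_cast
    ring
  by_cases hall : ∀ q ∈ Finset.Icc 1 s, d q = 0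
  · left
    intro q hq
    have h := hconf q
    rw [hall q hq] at h
    omega
  · right
    push_neg at hall
    set Q := (Finset.Icc 1 s).filter (fun q => d q ≠ 0) with hQ
    have hQne : Q.Nonempty := by
      obtain ⟨q, hq, hqne⟩ := hall
      exact ⟨q, Finset.mem_filter.mpr ⟨hq, hqne⟩⟩
    set q₀ := Q.min' hQne with hq₀def
    have hq₀Q : q₀ ∈ Q := Q.min'_mem hQne
    have hq₀ : q₀ ∈ Finset.Icc 1 s := (Finset.mem_filter.mp hq₀Q).1
    have hdq₀ : d q₀ ≠ 0 := (Finset.mem_filter.mp hq₀Q).2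
    obtain ⟨hq₀1, hq₀s⟩ := Finset.mem_Icc.mp hq₀
    have hzero : ∀ ℓ ∈ Finset.Icc 1 s, ℓ < q₀ → d ℓ = 0 := by
      intro ℓ hℓ hlt
      by_contra h
      have := Q.min'_le ℓ (Finset.mem_filter.mpr ⟨hℓ, h⟩)
      omega
    have hpos : 0 < d q₀ := by
      by_contra hneg
      push_neg at hneg
      have hdle : d q₀ ≤ -1 := by omega
      set n := s - q₀ with hn
      set f : ℕ → ℤ := fun q => (B:ℤ)^(s-q) * d q with hf
      have hS : 0 ≤ ∑ q ∈ Finset.Icc 1 s, f q := hsym i hi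
      have e1 : Finset.Icc 1 s = Finset.Ioc 0 s := by
        rw [← Finset.Icc_add_one_left_eq_Ioc, zero_add]
      have hsplit : ∑ q ∈ Finset.Ioc 0 q₀, f q + ∑ q ∈ Finset.Ioc q₀ s, f q
          = ∑ q ∈ Finset.Ioc 0 s, f q :=
        Finset.sum_Ioc_consecutive _ (Nat.zero_le _) hq₀s
      have h1 : ∑ q ∈ Finset.Ioc 0 q₀, f q = f q₀ := by
        apply Finset.sum_eq_single_of_mem q₀ (Finset.mem_Ioc.mpr ⟨by omega, le_refl _⟩)
        intro b hb hbne
        have hb' := Finset.mem_Ioc.mp hb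
        have hb0 : d b = 0 :=
          hzero b (Finset.mem_Icc.mpr ⟨hb'.1, le_trans hb'.2 hq₀s⟩) (by omega)
        simp [hf, hb0]
      have htail : ∑ q ∈ Finset.Ioc q₀ s, f q ≤ (n : ℤ) * ((B:ℤ)^(n-1) * (M:ℤ)) := by
        have hcard : (Finset.Ioc q₀ s).card = n := by
          rw [Nat.card_Ioc]
        calc ∑ q ∈ Finset.Ioc q₀ s, f q
            ≤ ∑ q ∈ Finset.Ioc q₀ s, (B:ℤ)^(n-1) * (M:ℤ) := by
              apply Finset.sum_le_sum
              intro q hq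
              have hq' := Finset.mem_Ioc.mp hq
              have hdq : d q ≤ (M:ℤ) :=
                le_trans (le_abs_self _)
                  (hdabs q (Finset.mem_Icc.mpr ⟨by omega, hq'.2⟩))
              have hBpow : (B:ℤ)^(s-q) ≤ (B:ℤ)^(n-1) :=
                pow_le_pow_right₀ hBZ (by omega)
              calc (B:ℤ)^(s-q) * d q ≤ (B:ℤ)^(s-q) * (M:ℤ) :=
                    mul_le_mul_of_nonneg_left hdq (pow_nonneg (by linarith) _)
                _ ≤ (B:ℤ)^(n-1) * (M:ℤ) :=
                    mul_le_mul_of_nonneg_right hBpow (by positivity)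
          _ = (n : ℤ) * ((B:ℤ)^(n-1) * (M:ℤ)) := by
              rw [Finset.sum_const, hcard, nsmul_eq_mul]
      have hfq₀ : f q₀ ≤ -(B:ℤ)^n := by
        have heq : (B:ℤ)^(s-q₀) = (B:ℤ)^n := by rw [hn]
        have : (B:ℤ)^n * d q₀ ≤ (B:ℤ)^n * (-1) :=
          mul_le_mul_of_nonneg_left hdle (pow_nonneg (by linarith) _)
        simpa [hf, heq] using this
      have hlt : (n : ℤ) * ((B:ℤ)^(n-1) * (M:ℤ)) < (B:ℤ)^n := by
        rcases Nat.eq_zero_or_pos n with h0 | hpos'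
        · simp [h0]
        · have hk : n - 1 + 1 = n := by omega
          have hsM : (s * M : ℤ) < (B : ℤ) := by
            have : s * M < B := by nlinarith [hB]
            exact_mod_cast this
          have hnM : (n : ℤ) * (M:ℤ) ≤ (s:ℤ) * (M:ℤ) := by
            have : n ≤ s := by omega
            have := mul_le_mul_of_nonneg_right (show (n:ℤ) ≤ s by exact_mod_cast this)
              (show (0:ℤ) ≤ M by positivity)
            linarith
          have hBk : (0:ℤ) < (B:ℤ)^(n-1) := pow_pos (by linarith) _
          calc (n : ℤ) * ((B:ℤ)^(n-1) * (M:ℤ)) = ((n:ℤ) * (M:ℤ)) * (B:ℤ)^(n-1) := by ring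
            _ ≤ ((s:ℤ) * (M:ℤ)) * (B:ℤ)^(n-1) := mul_le_mul_of_nonneg_right hnM (le_of_lt hBk)
            _ < (B:ℤ) * (B:ℤ)^(n-1) := by
                apply mul_lt_mul_of_pos_right _ hBk
                push_cast at hsM ⊢
                linarith
            _ = (B:ℤ)^n := by rw [← pow_succ', hk]
      rw [e1, ← hsplit, h1] at hS
      linarith
    refine ⟨q₀, hq₀, fun ℓ hℓ hlt => ?_, ?_⟩
    · have h := hconf ℓ
      rw [hzero ℓ hℓ hlt] at h
      omega
    · have h := hconf q₀
      omega
end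
end

section
/- If there exists an integral solution of assign(T), i.e., a map x : [m]×J → {0,1} with Σ_{i∈[m]} x_{ij} = 1 for all j ∈ J and Σ_{j∈J} x_{ij}·p_j ≤ T for all i ∈ [m], then there exists an integral solution of assign(B,T) (i.e., one additionally satisfying the symmetry-breaking constraints). -/
noncomputable section
open scoped Classical
open Finset

/-- If `assign(T)` has an integral solution, then so does `assign(B,T)` (i.e., one that
additionally satisfies the symmetry-breaking constraints). -/
theorem exists_integral_solution_with_symmetry_breaking {ι : Type*} [Fintype ι]
    (m s : ℕ) (ε T : ℝ) (p : ι → ℝ)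
    (hp : ∀ j, 0 < p j) (hT : 0 < T)
    (hε0 : 0 < ε) (hε1 : ε < 1) (hεint : ∃ t : ℤ, ε * (t : ℝ) = 1)
    (hs : (s : ℝ) = (1 - ε) / ε ^ 2)
    (B : ℕ) (hB : B = 1 + 2 * s * ((Finset.Icc 1 s).sup fun q => (Jq p ε T q).card))
    (hfeas : ∃ x : ℕ → ι → ℕ, (∀ i j, x i j ≤ 1) ∧
      (∀ j : ι, ∑ i ∈ Finset.Icc 1 m, x i j = 1) ∧
      (∀ i ∈ Finset.Icc 1 m, ∑ j : ι, (x i j : ℝ) * p j ≤ T)) :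
    ∃ x : ℕ → ι → ℕ, (∀ i j, x i j ≤ 1) ∧
      (∀ j : ι, ∑ i ∈ Finset.Icc 1 m, x i j = 1) ∧
      (∀ i ∈ Finset.Icc 1 m, ∑ j : ι, (x i j : ℝ) * p j ≤ T) ∧
      (∀ i ∈ Finset.Icc 1 (m - 1),
        0 ≤ ∑ q ∈ Finset.Icc 1 s,
              (B : ℤ) ^ (s - q) * ∑ j ∈ Jq p ε T q, ((x i j : ℤ) - (x (i + 1) j : ℤ))) := by
  classical
  obtain ⟨x, hx1, hx2, hx3⟩ := hfeas
  rcases Nat.eq_zero_or_pos m with hm | hm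
  · exact ⟨x, hx1, hx2, hx3, by simp [hm]⟩
  set f : ℕ → ℤ := fun i =>
    ∑ q ∈ Finset.Icc 1 s, (B : ℤ) ^ (s - q) * ∑ j ∈ Jq p ε T q, (x i j : ℤ) with hf
  set σ : Equiv.Perm (Fin m) := Tuple.sort (fun k : Fin m => -f ((k : ℕ) + 1)) with hσ
  have hσmono : Monotone ((fun k : Fin m => -f ((k : ℕ) + 1)) ∘ σ) := Tuple.monotone_sort _
  set g : ℕ → ℕ := fun i => if h : i - 1 < m then ((σ ⟨i - 1, h⟩ : Fin m) : ℕ) + 1 else i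
    with hg
  refine ⟨fun i j => x (g i) j, fun i j => hx1 _ j, ?_, ?_, ?_⟩
  · intro j
    have reindex : ∑ i ∈ Finset.Icc 1 m, x (g i) j = ∑ k : Fin m, x (((σ k : Fin m) : ℕ) + 1) j := by
      rw [← Finset.Ico_add_one_right_eq_Icc, Finset.sum_Ico_eq_sum_range, Nat.add_sub_cancel, ← Fin.sum_univ_eq_sum_range]
      apply Finset.sum_congr rfl
      intro k _
      have h1 : 1 + (k : ℕ) - 1 < m := by omega
      have hk : (⟨1 + (k : ℕ) - 1, h1⟩ : Fin m) = k := Fin.ext (show 1 + (k : ℕ) - 1 = (k : ℕ) by omega)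
      simp only [hg, dif_pos h1, hk]
    rw [reindex, Equiv.sum_comp σ (fun k : Fin m => x ((k : ℕ) + 1) j)]
    have h2 := hx2 j
    rw [← Finset.Ico_add_one_right_eq_Icc, Finset.sum_Ico_eq_sum_range, Nat.add_sub_cancel] at h2
    have hc : ∑ k ∈ Finset.range m, x (k + 1) j = ∑ k ∈ Finset.range m, x (1 + k) j :=
      Finset.sum_congr rfl fun k _ => by rw [add_comm]
    rw [Fin.sum_univ_eq_sum_range (fun k => x (k + 1) j), hc, h2]
  · intro i hi
    apply hx3
    simp only [Finset.mem_Icc] at hi ⊢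
    have h1 : i - 1 < m := by omega
    simp only [hg, dif_pos h1]
    have := (σ ⟨i - 1, h1⟩).isLt
    omega
  · intro i hi
    simp only [Finset.mem_Icc] at hi
    have h1 : i - 1 < m := by omega
    have h2 : i + 1 - 1 < m := by omega
    have hmono := hσmono (a := ⟨i - 1, h1⟩) (b := ⟨i + 1 - 1, h2⟩) (by
      simp only [Fin.mk_le_mk]; omega)
    simp only [Function.comp_apply, neg_le_neg_iff] at hmono
    have heq : (∑ q ∈ Finset.Icc 1 s,
        (B : ℤ) ^ (s - q) * ∑ j ∈ Jq p ε T q, ((x (g i) j : ℤ) - (x (g (i + 1)) j : ℤ)))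
        = f (g i) - f (g (i + 1)) := by
      simp [hf, Finset.sum_sub_distrib, mul_sub]
    rw [heq]
    simp only [hg, dif_pos h1, dif_pos h2]
    omega
end
end

section
/- Suppose there exists an assignment of the jobs J to the m machines with makespan at most OPT, and define the classes J_q and the constant B with respect to T = OPT. Then there exists an integral solution of order(B,(1+ε)·OPT), i.e., a map x : [m]×J → {0,1} satisfying Σ_{i∈[m]} x_{ij} = 1 for all j ∈ J, Σ_{j∈J} x_{ij}·p_j ≤ (1+ε)·OPT for all i ∈ [m], the symmetry-breaking constraints, and the ordering constraints. -/
noncomputable section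
open scoped Classical
open Finset

private lemma sum_enum_eq {ι M : Type*} [AddCommMonoid M] {e : ℕ → ι} {t : Finset ι} {n : ℕ}
    (hbij : Set.BijOn e (Set.Icc 1 n) ↑t) (F : ι → M) :
    ∑ j ∈ t, F j = ∑ ℓ ∈ Finset.Icc 1 n, F (e ℓ) := by
  refine (Finset.sum_nbij e ?_ ?_ ?_ fun a _ => rfl).symm
  · intro a ha
    have ha' : a ∈ Set.Icc 1 n := by simpa using ha
    exact hbij.mapsTo ha'
  · rw [Finset.coe_Icc]; exact hbij.injOn
  · rw [Finset.coe_Icc]; exact hbij.surjOn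

/-- If some assignment has makespan at most `OPT` (with classes `J_q` and `B` defined with
respect to `T = OPT`), then `order(B,(1+ε)·OPT)` has an integral solution: one satisfying
the assignment equalities, the load bound `(1+ε)·OPT`, the symmetry-breaking constraints and
the ordering constraints. -/
theorem exists_integral_solution_order {ι : Type*} [Fintype ι]
    (m s : ℕ) (ε OPT : ℝ) (p : ι → ℝ)
    (hp : ∀ j, 0 < p j) (hOPT : 0 < OPT)
    (hε0 : 0 < ε) (hε1 : ε < 1) (hεint : ∃ t : ℤ, ε * (t : ℝ) = 1)
    (hs : (s : ℝ) = (1 - ε) / ε ^ 2)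
    (B : ℕ) (hB : B = 1 + 2 * s * ((Finset.Icc 1 s).sup fun q => (Jq p ε OPT q).card))
    -- a fixed enumeration `J_q = {j_{q,1},…,j_{q,|J_q|}}` of each class
    (jenum : ℕ → ℕ → ι)
    (henum : ∀ q ∈ Finset.Icc 1 s,
      Set.BijOn (jenum q) (Set.Icc 1 (Jq p ε OPT q).card) ↑(Jq p ε OPT q))
    -- there is an assignment of makespan at most OPT
    (hfeas : ∃ σ : ι → ℕ, (∀ j, σ j ∈ Finset.Icc 1 m) ∧
      ∀ i ∈ Finset.Icc 1 m, ∑ j ∈ Finset.univ.filter (fun j => σ j = i), p j ≤ OPT) :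
    ∃ x : ℕ → ι → ℕ, (∀ i j, x i j ≤ 1) ∧
      (∀ j : ι, ∑ i ∈ Finset.Icc 1 m, x i j = 1) ∧
      (∀ i ∈ Finset.Icc 1 m, ∑ j : ι, (x i j : ℝ) * p j ≤ (1 + ε) * OPT) ∧
      (∀ i ∈ Finset.Icc 1 (m - 1),
        0 ≤ ∑ q ∈ Finset.Icc 1 s,
              (B : ℤ) ^ (s - q) * ∑ j ∈ Jq p ε OPT q, ((x i j : ℤ) - (x (i + 1) j : ℤ))) ∧
      (∀ q ∈ Finset.Icc 1 s, ∀ ℓ ∈ Finset.Icc 1 ((Jq p ε OPT q).card - 1),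
        ∀ h ∈ Finset.Icc 1 m,
          ∑ i ∈ Finset.Icc 1 h, x i (jenum q (ℓ + 1)) ≤
            ∑ i ∈ Finset.Icc 1 h, x i (jenum q ℓ)) := by
  classical
  obtain ⟨σ, hσm, hσload⟩ := hfeas
  have j₀ := jenum 0 0
  have hm : 1 ≤ m := by
    have := hσm j₀
    rw [Finset.mem_Icc] at this
    omega
  have hT : (0:ℝ) < ε ^ 2 * OPT := by positivity
  -- bounds for membership in a class
  have hJq_bounds : ∀ q (j : ι), j ∈ Jq p ε OPT q →
      (1 / ε + (q : ℝ) - 1) * ε ^ 2 * OPT ≤ p j ∧ p j < (1 / ε + (q : ℝ)) * ε ^ 2 * OPT := by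
    intro q j hj; simpa [Jq] using hj
  -- classes are pairwise disjoint
  have hlt_aux : ∀ q q' : ℕ, q < q' → ∀ j : ι,
      j ∈ Jq p ε OPT q → j ∈ Jq p ε OPT q' → False := by
    intro q q' hlt j hj hj'
    obtain ⟨_, h2⟩ := hJq_bounds q j hj
    obtain ⟨h3, _⟩ := hJq_bounds q' j hj'
    have hq : (q : ℝ) + 1 ≤ q' := by exact_mod_cast hlt
    nlinarith [hT]
  have hdisj : ∀ q q' : ℕ, q ≠ q' → Disjoint (Jq p ε OPT q) (Jq p ε OPT q') := by
    intro q q' hne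
    rw [Finset.disjoint_left]
    intro j hj hj'
    rcases hne.lt_or_gt with h | h
    · exact hlt_aux _ _ h j hj hj'
    · exact hlt_aux _ _ h j hj' hj
  -- counts of class q on (original) machine i
  obtain ⟨c, hc⟩ : ∃ c : ℕ → ℕ → ℕ,
      c = fun i q => ((Jq p ε OPT q).filter fun j => σ j = i).card := ⟨_, rfl⟩
  obtain ⟨key, hkey⟩ : ∃ k : ℕ → ℕ,
      k = fun i => ∑ q ∈ Finset.Icc 1 s, B ^ (s - q) * c i q := ⟨_, rfl⟩
  -- sort machines by decreasing key
  let g : Fin m → ℤ := fun i => -(key ((i : ℕ) + 1) : ℤ)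
  let π := Tuple.sort g
  obtain ⟨ρ, hρ⟩ : ∃ ρ : ℕ → ℕ,
      ρ = fun i => if h : i - 1 < m then ((π ⟨i - 1, h⟩ : Fin m) : ℕ) + 1 else i := ⟨_, rfl⟩
  obtain ⟨ρinv, hρinv'⟩ : ∃ ρi : ℕ → ℕ,
      ρi = fun i => if h : i - 1 < m then ((π.symm ⟨i - 1, h⟩ : Fin m) : ℕ) + 1 else i := ⟨_, rfl⟩
  have hρval : ∀ i (h : i - 1 < m), ρ i = ((π ⟨i - 1, h⟩ : Fin m) : ℕ) + 1 := by
    intro i h; rw [hρ]; simp only [dif_pos h]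
  have hρinvval : ∀ i (h : i - 1 < m), ρinv i = ((π.symm ⟨i - 1, h⟩ : Fin m) : ℕ) + 1 := by
    intro i h; rw [hρinv']; simp only [dif_pos h]
  have hρmem : ∀ i, i ≤ m → ρ i ∈ Finset.Icc 1 m := by
    intro i hi
    have h : i - 1 < m := by omega
    rw [hρval i h, Finset.mem_Icc]
    have := (π ⟨i - 1, h⟩).isLt
    omega
  have hρinvmem : ∀ i, i ≤ m → ρinv i ∈ Finset.Icc 1 m := by
    intro i hi
    have h : i - 1 < m := by omega
    rw [hρinvval i h, Finset.mem_Icc]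
    have := (π.symm ⟨i - 1, h⟩).isLt
    omega
  have hinvρ : ∀ i, 1 ≤ i → i ≤ m → ρinv (ρ i) = i := by
    intro i h1 h2
    have h : i - 1 < m := by omega
    rw [hρval i h]
    have h' : ((π ⟨i - 1, h⟩ : Fin m) : ℕ) + 1 - 1 < m := by
      have := (π ⟨i - 1, h⟩).isLt; omega
    rw [hρinvval _ h']
    have : (⟨((π ⟨i - 1, h⟩ : Fin m) : ℕ) + 1 - 1, h'⟩ : Fin m) = π ⟨i - 1, h⟩ := by
      apply Fin.ext; simp
    rw [this, Equiv.symm_apply_apply]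
    simp only [Fin.val_mk]
    omega
  have hρinvρ : ∀ i, 1 ≤ i → i ≤ m → ρ (ρinv i) = i := by
    intro i h1 h2
    have h : i - 1 < m := by omega
    rw [hρinvval i h]
    have h' : ((π.symm ⟨i - 1, h⟩ : Fin m) : ℕ) + 1 - 1 < m := by
      have := (π.symm ⟨i - 1, h⟩).isLt; omega
    rw [hρval _ h']
    have : (⟨((π.symm ⟨i - 1, h⟩ : Fin m) : ℕ) + 1 - 1, h'⟩ : Fin m) = π.symm ⟨i - 1, h⟩ := by
      apply Fin.ext; simp
    rw [this, Equiv.apply_symm_apply]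
    simp only [Fin.val_mk]
    omega
  have hkeymono : ∀ i, 1 ≤ i → i < m → key (ρ (i + 1)) ≤ key (ρ i) := by
    intro i h1 h2
    have ha : i - 1 < m := by omega
    have hb : i + 1 - 1 < m := by omega
    rw [hρval i ha, hρval (i + 1) hb]
    have hle : (⟨i - 1, ha⟩ : Fin m) ≤ ⟨i + 1 - 1, hb⟩ := by
      simp only [Fin.mk_le_mk]; omega
    have := Tuple.monotone_sort g hle
    simp only [Function.comp_apply, g, neg_le_neg_iff] at this
    exact_mod_cast this
  -- cumulative counts in sorted order
  obtain ⟨N, hN⟩ : ∃ N : ℕ → ℕ → ℕ,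
      N = fun q i => ∑ i' ∈ Finset.Icc 1 i, c (ρ i') q := ⟨_, rfl⟩
  have hN0 : ∀ q, N q 0 = 0 := by intro q; simp only [hN]; simp
  have hNmono : ∀ q i i', i ≤ i' → N q i ≤ N q i' := by
    intro q i i' h
    simp only [hN]
    exact Finset.sum_le_sum_of_subset (Finset.Icc_subset_Icc_right h)
  have hNstep : ∀ q i, 1 ≤ i → N q i = N q (i - 1) + c (ρ i) q := by
    intro q i h1
    obtain ⟨i', rfl⟩ : ∃ i', i = i' + 1 := ⟨i - 1, by omega⟩
    simp only [hN, Nat.add_sub_cancel]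
    exact Finset.sum_Icc_succ_top (by omega) _
  have hNm : ∀ q, N q m = (Jq p ε OPT q).card := by
    intro q
    simp only [hN]
    have h1 : ∑ i' ∈ Finset.Icc 1 m, c (ρ i') q = ∑ v ∈ Finset.Icc 1 m, c v q := by
      refine Finset.sum_nbij' ρ ρinv ?_ ?_ ?_ ?_ ?_
      · intro a ha; exact hρmem a (Finset.mem_Icc.1 ha).2
      · intro a ha; exact hρinvmem a (Finset.mem_Icc.1 ha).2
      · intro a ha; exact hinvρ a (Finset.mem_Icc.1 ha).1 (Finset.mem_Icc.1 ha).2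
      · intro a ha; exact hρinvρ a (Finset.mem_Icc.1 ha).1 (Finset.mem_Icc.1 ha).2
      · intro a _; rfl
    rw [h1, hc]
    exact (Finset.card_eq_sum_card_fiberwise fun j _ => hσm j).symm
  -- the machine receiving the ℓ-th job of class q
  obtain ⟨mach, hmach⟩ : ∃ f : ℕ → ℕ → ℕ,
      f = fun q ℓ => sInf {i | ℓ ≤ N q i} := ⟨_, rfl⟩
  have hmach_le_m : ∀ q ℓ, ℓ ≤ N q m → mach q ℓ ≤ m := by
    intro q ℓ h; rw [hmach]; exact Nat.sInf_le h
  have hmach_self : ∀ q ℓ, ℓ ≤ N q m → ℓ ≤ N q (mach q ℓ) := by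
    intro q ℓ h
    have h2 : sInf {i | ℓ ≤ N q i} ∈ {i | ℓ ≤ N q i} := Nat.sInf_mem ⟨m, h⟩
    rw [hmach]
    exact h2
  have hmach_pos : ∀ q ℓ, 1 ≤ ℓ → ℓ ≤ N q m → 1 ≤ mach q ℓ := by
    intro q ℓ h1 h2
    by_contra h
    push_neg at h
    have h0 : mach q ℓ = 0 := by omega
    have := hmach_self q ℓ h2
    rw [h0, hN0] at this
    omega
  have hmach_pred : ∀ q ℓ, 1 ≤ ℓ → ℓ ≤ N q m → N q (mach q ℓ - 1) < ℓ := by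
    intro q ℓ h1 h2
    have hpos := hmach_pos q ℓ h1 h2
    have h3 : mach q ℓ - 1 < mach q ℓ := by omega
    rw [hmach] at h3
    have h4 := Nat.notMem_of_lt_sInf h3
    rw [← hmach] at h4
    simp only [Set.mem_setOf_eq] at h4
    omega
  have hmach_mono : ∀ q ℓ, 1 ≤ ℓ → ℓ + 1 ≤ N q m → mach q ℓ ≤ mach q (ℓ + 1) := by
    intro q ℓ h1 h2
    have h3 : mach q (ℓ + 1) ∈ {i | ℓ ≤ N q i} :=
      le_trans (by omega : ℓ ≤ ℓ + 1) (hmach_self q (ℓ + 1) h2)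
    calc mach q ℓ = sInf {i | ℓ ≤ N q i} := by rw [hmach]
      _ ≤ mach q (ℓ + 1) := Nat.sInf_le h3
  -- the fiber of machines: indices ℓ with mach q ℓ = i
  have hfiber : ∀ q i, 1 ≤ i → i ≤ m →
      (Finset.Icc 1 (N q m)).filter (fun ℓ => mach q ℓ = i) =
        Finset.Icc (N q (i - 1) + 1) (N q i) := by
    intro q i hi1 him
    ext ℓ
    simp only [Finset.mem_filter, Finset.mem_Icc]
    constructor
    · rintro ⟨⟨h1, h2⟩, h3⟩
      have ha := hmach_pred q ℓ h1 h2
      have hb := hmach_self q ℓ h2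
      rw [h3] at ha hb
      omega
    · rintro ⟨h1, h2⟩
      have hℓ1 : 1 ≤ ℓ := by omega
      have hℓ2 : ℓ ≤ N q m := le_trans h2 (hNmono q i m him)
      refine ⟨⟨hℓ1, hℓ2⟩, ?_⟩
      have hup : mach q ℓ ≤ i := by rw [hmach]; exact Nat.sInf_le h2
      have hlo : N q (mach q ℓ - 1) < ℓ := hmach_pred q ℓ hℓ1 hℓ2
      by_contra hne
      have hlt : mach q ℓ < i := by omega
      have : N q (mach q ℓ) ≤ N q (i - 1) := hNmono q _ _ (by omega)
      have := hmach_self q ℓ hℓ2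
      omega
  have hfibercard : ∀ q i, 1 ≤ i → i ≤ m →
      ((Finset.Icc 1 (N q m)).filter (fun ℓ => mach q ℓ = i)).card = c (ρ i) q := by
    intro q i hi1 him
    rw [hfiber q i hi1 him, Nat.card_Icc]
    have h1 := hNstep q i hi1
    omega
  -- index of a job inside its class, and the new assignment τ
  obtain ⟨idx, hidx⟩ : ∃ f : ℕ → ι → ℕ,
      f = fun q j => if h : ∃ ℓ ∈ Set.Icc 1 (Jq p ε OPT q).card, jenum q ℓ = j
        then h.choose else 0 := ⟨_, rfl⟩
  obtain ⟨τ, hτ⟩ : ∃ τ : ι → ℕ,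
      τ = fun j => if h : ∃ q ∈ Finset.Icc 1 s, j ∈ Jq p ε OPT q
        then mach h.choose (idx h.choose j) else ρinv (σ j) := ⟨_, rfl⟩
  have hidx_spec : ∀ q ∈ Finset.Icc 1 s, ∀ j ∈ Jq p ε OPT q,
      idx q j ∈ Set.Icc 1 (Jq p ε OPT q).card ∧ jenum q (idx q j) = j := by
    intro q hq j hj
    have hex : ∃ ℓ ∈ Set.Icc 1 (Jq p ε OPT q).card, jenum q ℓ = j :=
      (henum q hq).surjOn hj
    have heq : idx q j = hex.choose := by rw [hidx]; exact dif_pos hex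
    rw [heq]
    exact ⟨hex.choose_spec.1, hex.choose_spec.2⟩
  have hidx_inv : ∀ q ∈ Finset.Icc 1 s, ∀ ℓ, 1 ≤ ℓ → ℓ ≤ (Jq p ε OPT q).card →
      idx q (jenum q ℓ) = ℓ := by
    intro q hq ℓ h1 h2
    have hmem : ℓ ∈ Set.Icc 1 (Jq p ε OPT q).card := ⟨h1, h2⟩
    have hj : jenum q ℓ ∈ Jq p ε OPT q := (henum q hq).mapsTo hmem
    obtain ⟨hin, heq⟩ := hidx_spec q hq _ hj
    exact (henum q hq).injOn hin hmem heq
  have hτ_long : ∀ q ∈ Finset.Icc 1 s, ∀ j ∈ Jq p ε OPT q, τ j = mach q (idx q j) := by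
    intro q hq j hj
    have hex : ∃ q' ∈ Finset.Icc 1 s, j ∈ Jq p ε OPT q' := ⟨q, hq, hj⟩
    have heq : τ j = mach hex.choose (idx hex.choose j) := by rw [hτ]; exact dif_pos hex
    rw [heq]
    obtain ⟨hq', hj'⟩ := hex.choose_spec
    have hqq : hex.choose = q := by
      by_contra hne
      exact (Finset.disjoint_left.1 (hdisj _ _ hne)) hj' hj
    rw [hqq]
  have hτ_short : ∀ j : ι, (∀ q ∈ Finset.Icc 1 s, j ∉ Jq p ε OPT q) → τ j = ρinv (σ j) := by
    intro j hj
    rw [hτ]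
    exact dif_neg (by rintro ⟨q, hq, hjq⟩; exact hj q hq hjq)
  -- τ of an enumerated job
  have hτ_enum : ∀ q ∈ Finset.Icc 1 s, ∀ ℓ, 1 ≤ ℓ → ℓ ≤ (Jq p ε OPT q).card →
      τ (jenum q ℓ) = mach q ℓ := by
    intro q hq ℓ h1 h2
    have hj : jenum q ℓ ∈ Jq p ε OPT q := (henum q hq).mapsTo ⟨h1, h2⟩
    rw [hτ_long q hq _ hj, hidx_inv q hq ℓ h1 h2]
  have hτmem : ∀ j : ι, τ j ∈ Finset.Icc 1 m := by
    intro j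
    by_cases hL : ∃ q ∈ Finset.Icc 1 s, j ∈ Jq p ε OPT q
    · obtain ⟨q, hq, hj⟩ := hL
      rw [hτ_long q hq j hj]
      obtain ⟨hin, _⟩ := hidx_spec q hq j hj
      have h1 : 1 ≤ idx q j := hin.1
      have h2 : idx q j ≤ N q m := by rw [hNm]; exact hin.2
      exact Finset.mem_Icc.2 ⟨hmach_pos q _ h1 h2, hmach_le_m q _ h2⟩
    · push_neg at hL
      rw [hτ_short j hL]
      exact hρinvmem _ (Finset.mem_Icc.1 (hσm j)).2
  -- split of the job set into short jobs and the classes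
  set Long : Finset ι := (Finset.Icc 1 s).biUnion (fun q => Jq p ε OPT q) with hLong
  set S : Finset ι := Finset.univ \ Long with hS
  have hsplit : ∀ F : ι → ℝ,
      ∑ j, F j = ∑ j ∈ S, F j + ∑ q ∈ Finset.Icc 1 s, ∑ j ∈ Jq p ε OPT q, F j := by
    intro F
    rw [show (Finset.univ : Finset ι) = S ∪ Long from
      (Finset.sdiff_union_of_subset (Finset.subset_univ _)).symm]
    rw [Finset.sum_union Finset.sdiff_disjoint]
    congr 1
    rw [hLong]
    exact Finset.sum_biUnion fun q _ q' _ hne => hdisj q q' hne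
  have hS_not : ∀ j ∈ S, ∀ q ∈ Finset.Icc 1 s, j ∉ Jq p ε OPT q := by
    intro j hj q hq hjq
    rw [hS, Finset.mem_sdiff] at hj
    exact hj.2 (Finset.mem_biUnion.2 ⟨q, hq, hjq⟩)
  -- new configuration counts
  have hconf : ∀ q ∈ Finset.Icc 1 s, ∀ i, 1 ≤ i → i ≤ m →
      ∑ j ∈ Jq p ε OPT q, (if τ j = i then (1:ℕ) else 0) = c (ρ i) q := by
    intro q hq i hi1 him
    rw [sum_enum_eq (henum q hq)]
    have h1 : ∀ ℓ ∈ Finset.Icc 1 (Jq p ε OPT q).card,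
        (if τ (jenum q ℓ) = i then (1:ℕ) else 0) = (if mach q ℓ = i then (1:ℕ) else 0) := by
      intro ℓ hℓ
      rw [Finset.mem_Icc] at hℓ
      rw [hτ_enum q hq ℓ hℓ.1 hℓ.2]
    rw [Finset.sum_congr rfl h1]
    simp only [Finset.sum_boole, Nat.cast_id]
    rw [show (Jq p ε OPT q).card = N q m from (hNm q).symm]
    exact hfibercard q i hi1 him
  refine ⟨fun i j => if τ j = i then 1 else 0, ?_, ?_, ?_, ?_, ?_⟩
  · intro i j; dsimp only; split_ifs <;> omega
  · -- assignment equalities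
    intro j
    dsimp only
    rw [Finset.sum_ite_eq (Finset.Icc 1 m) (τ j) (fun _ => (1:ℕ))]
    rw [if_pos (hτmem j)]
  · -- load constraints
    intro i hi
    dsimp only
    rw [Finset.mem_Icc] at hi
    obtain ⟨hi1, him⟩ := hi
    have hρIcc := Finset.mem_Icc.1 (hρmem i him)
    simp only [Nat.cast_ite, Nat.cast_one, Nat.cast_zero, ite_mul, one_mul, zero_mul]
    rw [hsplit]
    -- short part
    have hshort_eq : ∑ j ∈ S, (if τ j = i then p j else 0) =
        ∑ j ∈ S, (if σ j = ρ i then p j else 0) := by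
      refine Finset.sum_congr rfl fun j hj => ?_
      have hτj : τ j = ρinv (σ j) := hτ_short j (hS_not j hj)
      have hσj := Finset.mem_Icc.1 (hσm j)
      by_cases h : σ j = ρ i
      · rw [if_pos h, if_pos]
        rw [hτj, h, hinvρ i hi1 him]
      · rw [if_neg h, if_neg]
        intro hcon
        rw [hτj] at hcon
        apply h
        rw [← hρinvρ (σ j) hσj.1 hσj.2, hcon]
    -- per-class bounds
    have hclass : ∀ q ∈ Finset.Icc 1 s,
        ∑ j ∈ Jq p ε OPT q, (if τ j = i then p j else 0) ≤
          (∑ j ∈ Jq p ε OPT q, (if σ j = ρ i then p j else 0)) +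
            (c (ρ i) q : ℝ) * (ε ^ 2 * OPT) := by
      intro q hq
      have hq1 : 1 ≤ q := (Finset.mem_Icc.1 hq).1
      -- new class load
      have hnew : ∑ j ∈ Jq p ε OPT q, (if τ j = i then p j else 0) ≤
          (c (ρ i) q : ℝ) * ((1 / ε + (q : ℝ)) * ε ^ 2 * OPT) := by
        rw [sum_enum_eq (henum q hq)]
        have h1 : ∀ ℓ ∈ Finset.Icc 1 (Jq p ε OPT q).card,
            (if τ (jenum q ℓ) = i then p (jenum q ℓ) else 0) =
              (if mach q ℓ = i then p (jenum q ℓ) else 0) := by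
          intro ℓ hℓ
          rw [Finset.mem_Icc] at hℓ
          rw [hτ_enum q hq ℓ hℓ.1 hℓ.2]
        rw [Finset.sum_congr rfl h1, ← Finset.sum_filter]
        have hcard : ((Finset.Icc 1 (Jq p ε OPT q).card).filter
            (fun ℓ => mach q ℓ = i)).card = c (ρ i) q := by
          rw [show (Jq p ε OPT q).card = N q m from (hNm q).symm]
          exact hfibercard q i hi1 him
        calc ∑ ℓ ∈ (Finset.Icc 1 (Jq p ε OPT q).card).filter (fun ℓ => mach q ℓ = i),
              p (jenum q ℓ)
            ≤ ((Finset.Icc 1 (Jq p ε OPT q).card).filter (fun ℓ => mach q ℓ = i)).card •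
              ((1 / ε + (q : ℝ)) * ε ^ 2 * OPT) := by
              refine Finset.sum_le_card_nsmul _ _ _ fun ℓ hℓ => ?_
              rw [Finset.mem_filter, Finset.mem_Icc] at hℓ
              have hj : jenum q ℓ ∈ Jq p ε OPT q :=
                (henum q hq).mapsTo ⟨hℓ.1.1, hℓ.1.2⟩
              exact (hJq_bounds q _ hj).2.le
          _ = (c (ρ i) q : ℝ) * ((1 / ε + (q : ℝ)) * ε ^ 2 * OPT) := by
              rw [hcard, nsmul_eq_mul]
      -- old class load
      have hold : (c (ρ i) q : ℝ) * ((1 / ε + (q : ℝ) - 1) * ε ^ 2 * OPT) ≤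
          ∑ j ∈ Jq p ε OPT q, (if σ j = ρ i then p j else 0) := by
        rw [← Finset.sum_filter]
        have hcard : ((Jq p ε OPT q).filter (fun j => σ j = ρ i)).card = c (ρ i) q := by
          rw [hc]
        calc (c (ρ i) q : ℝ) * ((1 / ε + (q : ℝ) - 1) * ε ^ 2 * OPT)
            = ((Jq p ε OPT q).filter (fun j => σ j = ρ i)).card •
              ((1 / ε + (q : ℝ) - 1) * ε ^ 2 * OPT) := by rw [hcard, nsmul_eq_mul]
          _ ≤ ∑ j ∈ (Jq p ε OPT q).filter (fun j => σ j = ρ i), p j := by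
              refine Finset.card_nsmul_le_sum _ _ _ fun j hj => ?_
              rw [Finset.mem_filter] at hj
              exact (hJq_bounds q _ hj.1).1
      have hring : (1 / ε + (q : ℝ)) * ε ^ 2 * OPT =
          (1 / ε + (q : ℝ) - 1) * ε ^ 2 * OPT + ε ^ 2 * OPT := by ring
      calc ∑ j ∈ Jq p ε OPT q, (if τ j = i then p j else 0)
          ≤ (c (ρ i) q : ℝ) * ((1 / ε + (q : ℝ)) * ε ^ 2 * OPT) := hnew
        _ = (c (ρ i) q : ℝ) * ((1 / ε + (q : ℝ) - 1) * ε ^ 2 * OPT) +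
              (c (ρ i) q : ℝ) * (ε ^ 2 * OPT) := by rw [hring]; ring
        _ ≤ (∑ j ∈ Jq p ε OPT q, (if σ j = ρ i then p j else 0)) +
              (c (ρ i) q : ℝ) * (ε ^ 2 * OPT) := by linarith [hold]
    -- the old load of machine ρ i
    have hold_load : ∑ j ∈ S, (if σ j = ρ i then p j else 0) +
        ∑ q ∈ Finset.Icc 1 s, ∑ j ∈ Jq p ε OPT q, (if σ j = ρ i then p j else 0) ≤ OPT := by
      have h1 : ∑ j : ι, (if σ j = ρ i then p j else 0) =
          ∑ j ∈ S, (if σ j = ρ i then p j else 0) +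
            ∑ q ∈ Finset.Icc 1 s, ∑ j ∈ Jq p ε OPT q, (if σ j = ρ i then p j else 0) :=
        hsplit _
      have h2 : ∑ j : ι, (if σ j = ρ i then p j else 0) =
          ∑ j ∈ Finset.univ.filter (fun j => σ j = ρ i), p j := (Finset.sum_filter _ _).symm
      rw [← h1, h2]
      exact hσload (ρ i) (hρmem i him)
    -- bound on the total count of long jobs on machine ρ i
    have hCbound : (∑ q ∈ Finset.Icc 1 s, (c (ρ i) q : ℝ)) * (ε * OPT) ≤ OPT := by
      have h1 : ∀ q ∈ Finset.Icc 1 s,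
          (c (ρ i) q : ℝ) * (ε * OPT) ≤
            ∑ j ∈ Jq p ε OPT q, (if σ j = ρ i then p j else 0) := by
        intro q hq
        have hq1 : (1:ℝ) ≤ q := by exact_mod_cast (Finset.mem_Icc.1 hq).1
        have hold : (c (ρ i) q : ℝ) * ((1 / ε + (q : ℝ) - 1) * ε ^ 2 * OPT) ≤
            ∑ j ∈ Jq p ε OPT q, (if σ j = ρ i then p j else 0) := by
          rw [← Finset.sum_filter]
          have hcard : ((Jq p ε OPT q).filter (fun j => σ j = ρ i)).card = c (ρ i) q := by
            rw [hc]
          calc (c (ρ i) q : ℝ) * ((1 / ε + (q : ℝ) - 1) * ε ^ 2 * OPT)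
              = ((Jq p ε OPT q).filter (fun j => σ j = ρ i)).card •
                ((1 / ε + (q : ℝ) - 1) * ε ^ 2 * OPT) := by rw [hcard, nsmul_eq_mul]
            _ ≤ ∑ j ∈ (Jq p ε OPT q).filter (fun j => σ j = ρ i), p j := by
                refine Finset.card_nsmul_le_sum _ _ _ fun j hj => ?_
                rw [Finset.mem_filter] at hj
                exact (hJq_bounds q _ hj.1).1
        have hlow : ε * OPT ≤ (1 / ε + (q : ℝ) - 1) * ε ^ 2 * OPT := by
          have h2 : (1 / ε + (q : ℝ) - 1) * ε ^ 2 = ε + ((q : ℝ) - 1) * ε ^ 2 := by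
            field_simp; ring
          rw [h2]
          nlinarith [mul_nonneg (mul_nonneg (sub_nonneg.2 hq1) (sq_nonneg ε)) hOPT.le]
        have hc0 : (0:ℝ) ≤ (c (ρ i) q : ℝ) := Nat.cast_nonneg _
        nlinarith [mul_le_mul_of_nonneg_left hlow hc0]
      have h2 : ∑ q ∈ Finset.Icc 1 s, (c (ρ i) q : ℝ) * (ε * OPT) ≤
          ∑ q ∈ Finset.Icc 1 s, ∑ j ∈ Jq p ε OPT q, (if σ j = ρ i then p j else 0) :=
        Finset.sum_le_sum h1
      rw [← Finset.sum_mul] at h2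
      have h3 : (0:ℝ) ≤ ∑ j ∈ S, (if σ j = ρ i then p j else 0) :=
        Finset.sum_nonneg fun j _ => by split_ifs; exacts [(hp j).le, le_refl 0]
      linarith [hold_load]
    -- put everything together
    have hsum_class : ∑ q ∈ Finset.Icc 1 s, ∑ j ∈ Jq p ε OPT q, (if τ j = i then p j else 0) ≤
        ∑ q ∈ Finset.Icc 1 s, (∑ j ∈ Jq p ε OPT q, (if σ j = ρ i then p j else 0) +
          (c (ρ i) q : ℝ) * (ε ^ 2 * OPT)) := Finset.sum_le_sum hclass
    rw [Finset.sum_add_distrib] at hsum_class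
    have hC2 : ∑ q ∈ Finset.Icc 1 s, (c (ρ i) q : ℝ) * (ε ^ 2 * OPT) ≤ ε * OPT := by
      rw [← Finset.sum_mul]
      have hC0 : (0:ℝ) ≤ ∑ q ∈ Finset.Icc 1 s, (c (ρ i) q : ℝ) :=
        Finset.sum_nonneg fun q _ => Nat.cast_nonneg _
      nlinarith [hCbound, mul_le_mul_of_nonneg_right hCbound hε0.le]
    rw [hshort_eq]
    nlinarith [hsum_class, hC2, hold_load]
  · -- symmetry-breaking constraints
    intro i hi
    dsimp only
    rw [Finset.mem_Icc] at hi
    obtain ⟨hi1, him⟩ := hi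
    have hilt : i < m := by omega
    have hkeyZ : ∀ v, (key v : ℤ) = ∑ q ∈ Finset.Icc 1 s, (B:ℤ) ^ (s - q) * (c v q : ℤ) := by
      intro v
      rw [hkey]
      push_cast
      rfl
    simp only [Nat.cast_ite, Nat.cast_one, Nat.cast_zero]
    have h1 : ∀ q ∈ Finset.Icc 1 s,
        (B : ℤ) ^ (s - q) * ∑ j ∈ Jq p ε OPT q,
          ((if τ j = i then (1:ℤ) else 0) - (if τ j = i + 1 then (1:ℤ) else 0)) =
        (B : ℤ) ^ (s - q) * (c (ρ i) q : ℤ) - (B : ℤ) ^ (s - q) * (c (ρ (i + 1)) q : ℤ) := by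
      intro q hq
      have e1 : ∑ j ∈ Jq p ε OPT q, (if τ j = i then (1:ℤ) else 0) = ((c (ρ i) q : ℕ) : ℤ) := by
        rw [← hconf q hq i hi1 (by omega)]
        push_cast
        rfl
      have e2 : ∑ j ∈ Jq p ε OPT q, (if τ j = i + 1 then (1:ℤ) else 0) =
          ((c (ρ (i + 1)) q : ℕ) : ℤ) := by
        rw [← hconf q hq (i + 1) (by omega) (by omega)]
        push_cast
        rfl
      rw [Finset.sum_sub_distrib, e1, e2]
      ring
    rw [Finset.sum_congr rfl h1, Finset.sum_sub_distrib]
    have h2 := hkeymono i hi1 hilt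
    have h3 : (key (ρ (i+1)) : ℤ) ≤ (key (ρ i) : ℤ) := by exact_mod_cast h2
    rw [hkeyZ, hkeyZ] at h3
    linarith
  · -- ordering constraints
    intro q hq ℓ hℓ h hh
    dsimp only
    rw [Finset.mem_Icc] at hℓ hh
    obtain ⟨hℓ1, hℓ2⟩ := hℓ
    have hcard2 : ℓ + 1 ≤ (Jq p ε OPT q).card := by omega
    have hτℓ : τ (jenum q ℓ) = mach q ℓ := hτ_enum q hq ℓ hℓ1 (by omega)
    have hτℓ1 : τ (jenum q (ℓ + 1)) = mach q (ℓ + 1) := hτ_enum q hq (ℓ + 1) (by omega) hcard2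
    have hNcard : ℓ + 1 ≤ N q m := by rw [hNm]; exact hcard2
    have hmono := hmach_mono q ℓ hℓ1 hNcard
    have hpos := hmach_pos q ℓ hℓ1 (by omega)
    rw [Finset.sum_ite_eq (Finset.Icc 1 h) (τ (jenum q (ℓ+1))) (fun _ => (1:ℕ)),
        Finset.sum_ite_eq (Finset.Icc 1 h) (τ (jenum q ℓ)) (fun _ => (1:ℕ))]
    rw [hτℓ, hτℓ1]
    split_ifs with h1 h2
    · omega
    · exfalso
      rw [Finset.mem_Icc] at h1 h2
      omega
    · omega
    · omega
end
end
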